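/- arXiv:1107.1381 — 6 statements merged into one kernel-verified Lean document; each statement's English description precedes it below -/
import Mathlib

section
/- Let m ≥ 2 and r ≥ 4 be integers, let N ≤ r, and let A_1, …, A_N be subsets of [m] such that every element j ∈ [m] belongs to A_i for at least two indices i (i.e. the family is a double cover of [m]). Then the number of pairs 1 ≤ i < j ≤ N with A_i ∩ A_j ≠ ∅ is at most λ(r)·(Σ_{i=1}^N |A_i| − 2m) + m. -/
open Finset in
/-- The number of increasing pairs drawn from `S` is at most `C(|S|, 2)`. -/
lemma pairs_card_le_aux {α : Type*} [DecidableEq α] [LinearOrder α] (S : Finset α) :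
    ((S ×ˢ S).filter fun p => p.1 < p.2).card ≤ S.card.choose 2 := by
  rw [← Finset.card_powersetCard 2 S]
  apply Finset.card_le_card_of_injOn (fun p => ({p.1, p.2} : Finset α))
  · intro p hp
    simp only [mem_coe, mem_filter, Finset.mem_product] at hp ⊢
    rw [Finset.mem_powersetCard]
    refine ⟨?_, ?_⟩
    · intro x hx
      simp only [Finset.mem_insert, Finset.mem_singleton] at hx
      rcases hx with h | h <;> subst h
      · exact hp.1.1
      · exact hp.1.2
    · rw [Finset.card_insert_of_notMem (by simp [hp.2.ne]), Finset.card_singleton]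
  · intro p hp q hq h
    simp only [mem_coe, mem_filter, Finset.mem_product] at hp hq
    have h' : ({p.1, p.2} : Finset α) = {q.1, q.2} := h
    have h1 : p.1 ∈ ({q.1, q.2} : Finset α) := by rw [← h']; simp
    have h2 : p.2 ∈ ({q.1, q.2} : Finset α) := by rw [← h']; simp
    simp only [Finset.mem_insert, Finset.mem_singleton] at h1 h2
    rcases h1 with e1 | e1 <;> rcases h2 with e2 | e2
    · exact absurd (e1.trans e2.symm) hp.2.ne
    · exact Prod.ext e1 e2
    · have hlt : q.2 < q.1 := by rw [← e1, ← e2]; exact hp.2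
      exact absurd (hlt.trans hq.2) (lt_irrefl _)
    · exact absurd (e1.trans e2.symm) hp.2.ne

/-- Double counting: summing covering degrees equals summing cardinalities. -/
lemma dc_sum_aux (m N : ℕ) (A : Fin N → Finset (Fin m)) :
    ∑ j : Fin m, (Finset.univ.filter (fun i => j ∈ A i)).card = ∑ i, (A i).card := by
  simp_rw [Finset.card_filter]
  rw [Finset.sum_comm]
  congr 1; ext i
  simp [Finset.card_filter]

/-- The pointwise secant bound for `2 ≤ d ≤ r - 1`. -/
lemma choose_le_secant_aux (r d : ℕ) (hr : 4 ≤ r) (h2 : 2 ≤ d) (hd : d + 1 ≤ r) :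
    (d.choose 2 : ℝ) ≤ ((r.choose 2 : ℝ) - 2) / ((r : ℝ) - 2) * ((d : ℝ) - 2) + 1 := by
  have hy : (0:ℝ) < (r:ℝ) - 2 := by
    have : (4:ℝ) ≤ r := by exact_mod_cast hr
    linarith
  have hx2 : (2:ℝ) ≤ d := by exact_mod_cast h2
  have hxy : (d:ℝ) + 1 ≤ r := by exact_mod_cast hd
  have hy4 : (4:ℝ) ≤ r := by exact_mod_cast hr
  rw [Nat.cast_choose_two, Nat.cast_choose_two, div_mul_eq_mul_div,
    ← sub_le_iff_le_add, le_div_iff₀ hy]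
  nlinarith [mul_nonneg (sub_nonneg.2 hx2) (sub_nonneg.2 hxy)]

/-- `λ(r) = (C(r,2) - 2)/(r - 2)`. -/
noncomputable def lam (r : ℕ) : ℝ := ((r.choose 2 : ℝ) - 2) / ((r : ℝ) - 2)

/-- **Lemma 11.** Let `m ≥ 2`, `r ≥ 4`, and let `A_1, …, A_N` (with `N ≤ r`) be a
multi-family of subsets of `[m]` which is a double cover of `[m]`. Then the number of
intersecting pairs is at most `λ(r)(Σ|A_i| - 2m) + m`. -/
theorem double_cover_intersecting_pairs (m r N : ℕ) (hm : 2 ≤ m) (hr : 4 ≤ r)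
    (hN : N ≤ r) (A : Fin N → Finset (Fin m))
    (hcover : ∀ j : Fin m, 2 ≤ (Finset.univ.filter (fun i => j ∈ A i)).card) :
    ((Finset.univ.filter
        (fun ij : Fin N × Fin N => ij.1 < ij.2 ∧ (A ij.1 ∩ A ij.2).Nonempty)).card : ℝ)
      ≤ lam r * ((∑ i, ((A i).card : ℝ)) - 2 * m) + m := by
  classical
  set S : Fin m → Finset (Fin N) := fun j => Finset.univ.filter (fun i => j ∈ A i) with hS
  set d : Fin m → ℕ := fun j => (S j).card with hd
  have hy : (0:ℝ) < (r:ℝ) - 2 := by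
    have : (4:ℝ) ≤ r := by exact_mod_cast hr
    linarith
  have hlam0 : 0 ≤ lam r := by
    apply div_nonneg _ hy.le
    have : 6 ≤ r.choose 2 := by
      calc 6 = (4).choose 2 := by decide
      _ ≤ r.choose 2 := Nat.choose_le_choose 2 hr
    have : (6:ℝ) ≤ (r.choose 2 : ℝ) := by exact_mod_cast this
    linarith
  have hsum : ∑ j : Fin m, ((d j : ℝ)) = ∑ i, ((A i).card : ℝ) := by
    have := dc_sum_aux m N A
    exact_mod_cast this
  have hdN : ∀ j, d j ≤ N := fun j => (Finset.card_filter_le _ _).trans (by simp)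
  by_cases hcase : ∀ j, d j + 1 ≤ r
  · -- every degree is at most r - 1
    have hstep1 : (Finset.univ.filter
        (fun ij : Fin N × Fin N => ij.1 < ij.2 ∧ (A ij.1 ∩ A ij.2).Nonempty)).card
        ≤ ∑ j : Fin m, (d j).choose 2 := by
      calc (Finset.univ.filter
          (fun ij : Fin N × Fin N => ij.1 < ij.2 ∧ (A ij.1 ∩ A ij.2).Nonempty)).card
          ≤ (Finset.univ.biUnion
              (fun j : Fin m => ((S j) ×ˢ (S j)).filter fun p => p.1 < p.2)).card := by
            apply Finset.card_le_card
            intro ij hij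
            simp only [Finset.mem_filter, Finset.mem_univ, true_and] at hij
            obtain ⟨hlt, x, hx⟩ := hij
            rw [Finset.mem_inter] at hx
            rw [Finset.mem_biUnion]
            refine ⟨x, Finset.mem_univ _, ?_⟩
            simp only [Finset.mem_filter, Finset.mem_product, hS, Finset.mem_univ,
              true_and, hx.1, hx.2, hlt, and_self]
        _ ≤ ∑ j : Fin m, (((S j) ×ˢ (S j)).filter fun p => p.1 < p.2).card :=
            Finset.card_biUnion_le
        _ ≤ ∑ j : Fin m, (d j).choose 2 :=
            Finset.sum_le_sum fun j _ => pairs_card_le_aux (S j)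
    calc ((Finset.univ.filter
        (fun ij : Fin N × Fin N => ij.1 < ij.2 ∧ (A ij.1 ∩ A ij.2).Nonempty)).card : ℝ)
        ≤ ∑ j : Fin m, ((d j).choose 2 : ℝ) := by exact_mod_cast hstep1
      _ ≤ ∑ j : Fin m, (lam r * ((d j : ℝ) - 2) + 1) :=
          Finset.sum_le_sum fun j _ => choose_le_secant_aux r (d j) hr (hcover j) (hcase j)
      _ = lam r * ((∑ j : Fin m, (d j : ℝ)) - 2 * m) + m := by
          rw [Finset.sum_add_distrib, Finset.sum_const, ← Finset.mul_sum,
            Finset.sum_sub_distrib, Finset.sum_const, Finset.card_univ, Fintype.card_fin]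
          push_cast
          ring
      _ = lam r * ((∑ i, ((A i).card : ℝ)) - 2 * m) + m := by rw [hsum]
  · -- some degree equals r
    push_neg at hcase
    obtain ⟨j0, hj0⟩ := hcase
    have hj0r : r ≤ d j0 := by omega
    have hstep1 : (Finset.univ.filter
        (fun ij : Fin N × Fin N => ij.1 < ij.2 ∧ (A ij.1 ∩ A ij.2).Nonempty)).card
        ≤ r.choose 2 := by
      calc (Finset.univ.filter
          (fun ij : Fin N × Fin N => ij.1 < ij.2 ∧ (A ij.1 ∩ A ij.2).Nonempty)).card
          ≤ (((Finset.univ : Finset (Fin N)) ×ˢ Finset.univ).filter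
              fun p => p.1 < p.2).card := by
            apply Finset.card_le_card
            intro ij hij
            simp only [Finset.mem_filter, Finset.mem_univ, true_and,
              Finset.mem_product, and_self] at hij ⊢
            exact hij.1
        _ ≤ (Finset.univ : Finset (Fin N)).card.choose 2 := pairs_card_le_aux _
        _ = N.choose 2 := by rw [Finset.card_univ, Fintype.card_fin]
        _ ≤ r.choose 2 := Nat.choose_le_choose 2 hN
    have hterm : ∀ j ∈ Finset.univ, (0:ℝ) ≤ (d j : ℝ) - 2 := by
      intro j _
      have := hcover j
      have : (2:ℝ) ≤ (d j : ℝ) := by exact_mod_cast this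
      linarith
    have hsumlb : (r:ℝ) - 2 ≤ (∑ i, ((A i).card : ℝ)) - 2 * m := by
      have h1 : (d j0 : ℝ) - 2 ≤ ∑ j : Fin m, ((d j : ℝ) - 2) :=
        Finset.single_le_sum hterm (Finset.mem_univ j0)
      have h2 : ∑ j : Fin m, ((d j : ℝ) - 2) = (∑ j : Fin m, (d j : ℝ)) - 2 * m := by
        rw [Finset.sum_sub_distrib, Finset.sum_const, Finset.card_univ, Fintype.card_fin]
        push_cast; ring
      have h3 : (r:ℝ) ≤ (d j0 : ℝ) := by exact_mod_cast hj0r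
      rw [h2, hsum] at h1
      linarith
    have hlamr : lam r * ((r:ℝ) - 2) = (r.choose 2 : ℝ) - 2 := by
      rw [lam, div_mul_cancel₀ _ hy.ne']
    have hm2 : (2:ℝ) ≤ (m:ℝ) := by exact_mod_cast hm
    calc ((Finset.univ.filter
        (fun ij : Fin N × Fin N => ij.1 < ij.2 ∧ (A ij.1 ∩ A ij.2).Nonempty)).card : ℝ)
        ≤ (r.choose 2 : ℝ) := by exact_mod_cast hstep1
      _ ≤ lam r * ((r:ℝ) - 2) + 2 := by rw [hlamr]; linarith
      _ ≤ lam r * ((∑ i, ((A i).card : ℝ)) - 2 * m) + m := by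
          have := mul_le_mul_of_nonneg_left hsumlb hlam0
          linarith
end

section
/- Let m ≥ 2 and r ≥ 4 be integers, and let a : 𝒫(m) → ℕ be a function on the nonempty subsets of [m] such that Σ_S a_S ≤ r and Σ_{S ∋ j} a_S ≥ 2 for every j ∈ [m]. Then Σ_{S ∈ 𝒫(m)} C(a_S, 2) + Σ_{{S,T} ∈ 𝒥} a_S·a_T ≤ λ(r)·(Σ_{S ∈ 𝒫(m)} a_S·|S| − 2m) + m, where 𝒥 is the set of unordered pairs {S,T} of distinct nonempty subsets of [m] with S ∩ T ≠ ∅. -/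
lemma lam_nonneg {r : ℕ} (hr : 4 ≤ r) : 0 ≤ lam r := by
  have h1 : (4:ℝ) ≤ r := by exact_mod_cast hr
  have h2 : (6:ℕ) ≤ r.choose 2 := by
    calc (6:ℕ) = Nat.choose 4 2 := by decide
    _ ≤ r.choose 2 := Nat.choose_le_choose 2 hr
  have h3 : (6:ℝ) ≤ (r.choose 2 : ℝ) := by exact_mod_cast h2
  apply div_nonneg <;> linarith

lemma lam_mul {r : ℕ} (hr : 4 ≤ r) : lam r * ((r:ℝ) - 2) = (r.choose 2 : ℝ) - 2 := by
  have h1 : (4:ℝ) ≤ r := by exact_mod_cast hr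
  rw [lam, div_mul_cancel₀]
  intro h; linarith

lemma choose_le_lam {r d : ℕ} (hr : 4 ≤ r) (h2 : 2 ≤ d) (hdr : d < r) :
    (d.choose 2 : ℝ) ≤ lam r * ((d:ℝ) - 2) + 1 := by
  have hR : (4:ℝ) ≤ r := by exact_mod_cast hr
  have hD : (2:ℝ) ≤ d := by exact_mod_cast h2
  have hDR : (d:ℝ) + 1 ≤ r := by exact_mod_cast hdr
  rw [Nat.cast_choose_two, lam, Nat.cast_choose_two]
  set x := (d:ℝ) with hx
  set R := (r:ℝ) with hRdef
  have hne : (0:ℝ) < R - 2 := by linarith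
  rw [← sub_nonneg]
  have key : (R*(R-1)/2 - 2)/(R-2)*(x-2) + 1 - x*(x-1)/2
      = ((x-2)*((R*R - R - 4) - (R-2)*(x+1)))/(2*(R-2)) := by
    field_simp
    ring
  rw [key]
  apply div_nonneg
  · apply mul_nonneg (by linarith)
    nlinarith
  · linarith

/-- **Lemma 12.** Let `m ≥ 2`, `r ≥ 4`, and let `a : 𝒫(m) → ℕ` (on the nonempty subsets
`P` of `[m]`) satisfy `Σ_S a_S ≤ r` and `Σ_{S ∋ j} a_S ≥ 2` for every `j ∈ [m]`. Then
`Σ_S C(a_S,2) + Σ_{{S,T} ∈ 𝒥} a_S a_T ≤ λ(r)(Σ_S a_S |S| - 2m) + m`, where `𝒥` consists of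
the unordered pairs of distinct intersecting nonempty sets (the sum over unordered pairs is
written as half the sum over ordered pairs). -/
theorem weighted_double_cover_bound (m r : ℕ) (hm : 2 ≤ m) (hr : 4 ≤ r)
    (a : Finset (Fin m) → ℕ) (P : Finset (Finset (Fin m)))
    (hP : P = Finset.univ.filter (fun S : Finset (Fin m) => S.Nonempty))
    (htotal : ∑ S ∈ P, a S ≤ r)
    (hcover : ∀ j : Fin m, 2 ≤ ∑ S ∈ P.filter (fun S => j ∈ S), a S) :
    (∑ S ∈ P, ((a S).choose 2 : ℝ)) +
      (1 / 2) * ∑ S ∈ P, ∑ T ∈ P.filter (fun T => T ≠ S ∧ (S ∩ T).Nonempty),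
        (a S : ℝ) * (a T : ℝ)
      ≤ lam r * ((∑ S ∈ P, (a S : ℝ) * (S.card : ℝ)) - 2 * m) + m := by
  classical
  set d : Fin m → ℕ := fun j => ∑ S ∈ P.filter (fun S => j ∈ S), a S with hd
  have hdl : ∀ j, 2 ≤ d j := fun j => hcover j
  -- basic cast facts
  have hcard : ∀ S ∈ P, 1 ≤ S.card := by
    intro S hS
    rw [hP, Finset.mem_filter] at hS
    exact Finset.card_pos.mpr hS.2
  -- sum of degrees equals weighted size sum (ℕ)
  have hDsumN : ∑ j : Fin m, d j = ∑ S ∈ P, a S * S.card := by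
    simp only [hd, Finset.sum_filter]
    rw [Finset.sum_comm]
    refine Finset.sum_congr rfl fun S _ => ?_
    simp [Finset.sum_ite_mem, Finset.univ_inter, mul_comm]
  have hDsum : ∑ j : Fin m, (d j : ℝ) = ∑ S ∈ P, (a S:ℝ) * (S.card:ℝ) := by
    have := congrArg (fun k : ℕ => (k : ℝ)) hDsumN
    push_cast at this
    simpa using this
  -- sum of squared degrees
  have hDsq : ∑ j : Fin m, (d j:ℝ)^2
      = ∑ S ∈ P, ∑ T ∈ P, (((S ∩ T).card : ℝ)) * ((a S:ℝ) * (a T:ℝ)) := by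
    have h1 : ∀ j : Fin m, (d j : ℝ)^2 = ∑ S ∈ P, ∑ T ∈ P,
        (if j ∈ S ∧ j ∈ T then (a S:ℝ)*(a T:ℝ) else 0) := by
      intro j
      have hdc : (d j : ℝ) = ∑ S ∈ P, (if j ∈ S then (a S:ℝ) else 0) := by
        rw [hd]
        push_cast
        rw [Finset.sum_filter]
      rw [hdc, sq, Finset.sum_mul_sum]
      refine Finset.sum_congr rfl fun S _ => Finset.sum_congr rfl fun T _ => ?_
      by_cases h1 : j ∈ S <;> by_cases h2 : j ∈ T <;> simp [h1, h2]
    simp only [h1]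
    rw [Finset.sum_comm]
    refine Finset.sum_congr rfl fun S _ => ?_
    rw [Finset.sum_comm]
    refine Finset.sum_congr rfl fun T _ => ?_
    simp only [← Finset.mem_inter]
    rw [Finset.sum_ite_mem, Finset.univ_inter, Finset.sum_const, nsmul_eq_mul]
  have hchoose : ∀ k : ℕ, ((k.choose 2 : ℕ) : ℝ) = (k:ℝ)*((k:ℝ)-1)/2 :=
    fun k => Nat.cast_choose_two (K := ℝ) k
  set N : ℝ := ∑ S ∈ P, (a S : ℝ) with hN
  have hNr : N ≤ (r:ℝ) := by
    rw [hN]; push_cast [← Nat.cast_sum]; exact_mod_cast htotal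
  have hN0 : 0 ≤ N := Finset.sum_nonneg fun S _ => by positivity
  set A : ℝ := ∑ S ∈ P, (a S : ℝ)^2 with hA
  have hchsum : ∑ S ∈ P, ((a S).choose 2 : ℝ) = (A - N)/2 := by
    rw [hA, hN, ← Finset.sum_sub_distrib, Finset.sum_div]
    refine Finset.sum_congr rfl fun S _ => ?_
    rw [hchoose]; ring
  set W : ℝ := ∑ S ∈ P, (a S : ℝ) * (S.card : ℝ) with hW
  set pairSum : ℝ := ∑ S ∈ P, ∑ T ∈ P.filter (fun T => T ≠ S ∧ (S ∩ T).Nonempty),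
        (a S : ℝ) * (a T : ℝ) with hpair
  by_cases hbig : ∃ j : Fin m, r ≤ d j
  · -- Case B : some degree is at least r
    obtain ⟨j0, hj0⟩ := hbig
    have hWge : (r:ℝ) + 2*m ≤ 2 + W := by
      have hsplit : ∑ j : Fin m, d j = d j0 + ∑ j ∈ Finset.univ.erase j0, d j :=
        (Finset.add_sum_erase _ d (Finset.mem_univ j0)).symm
      have h2 : 2*(m-1) ≤ ∑ j ∈ Finset.univ.erase j0, d j := by
        calc 2*(m-1) = ∑ _j ∈ Finset.univ.erase j0, 2 := by
              rw [Finset.sum_const, Finset.card_erase_of_mem (Finset.mem_univ j0),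
                Finset.card_univ, Fintype.card_fin, smul_eq_mul, mul_comm]
        _ ≤ _ := Finset.sum_le_sum fun j _ => hdl j
      have hN2 : r + 2*m ≤ 2 + ∑ j : Fin m, d j := by omega
      have hcast : ((r + 2*m : ℕ) : ℝ) ≤ ((2 + ∑ j : Fin m, d j : ℕ) : ℝ) := by
        exact_mod_cast hN2
      push_cast at hcast
      rw [hDsum] at hcast
      linarith
    -- bound LHS by N(N-1)/2
    have hpairle : pairSum ≤ N^2 - A := by
      have hstep : ∀ S ∈ P, ∑ T ∈ P.filter (fun T => T ≠ S ∧ (S ∩ T).Nonempty),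
          (a S : ℝ) * (a T : ℝ) ≤ (∑ T ∈ P, (a S : ℝ) * (a T : ℝ)) - (a S:ℝ)^2 := by
        intro S hS
        have hsub : P.filter (fun T => T ≠ S ∧ (S ∩ T).Nonempty) ⊆ P.erase S := by
          intro T hT
          rw [Finset.mem_filter] at hT
          exact Finset.mem_erase.mpr ⟨hT.2.1, hT.1⟩
        calc ∑ T ∈ P.filter (fun T => T ≠ S ∧ (S ∩ T).Nonempty), (a S : ℝ) * (a T : ℝ)
            ≤ ∑ T ∈ P.erase S, (a S : ℝ) * (a T : ℝ) :=
              Finset.sum_le_sum_of_subset_of_nonneg hsub (fun T _ _ => by positivity)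
          _ = (∑ T ∈ P, (a S : ℝ) * (a T : ℝ)) - (a S:ℝ)*(a S:ℝ) :=
              Finset.sum_erase_eq_sub (f := fun T => (a S : ℝ) * (a T : ℝ)) hS
          _ = (∑ T ∈ P, (a S : ℝ) * (a T : ℝ)) - (a S:ℝ)^2 := by ring_nf
      calc pairSum ≤ ∑ S ∈ P, ((∑ T ∈ P, (a S : ℝ) * (a T : ℝ)) - (a S:ℝ)^2) :=
            Finset.sum_le_sum hstep
        _ = N^2 - A := by
            rw [Finset.sum_sub_distrib, hA, hN, sq, Finset.sum_mul_sum]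
    have hLHS : (∑ S ∈ P, ((a S).choose 2 : ℝ)) + (1/2) * pairSum ≤ N*(N-1)/2 := by
      rw [hchsum]; nlinarith [hpairle]
    have hRr : (4:ℝ) ≤ r := by exact_mod_cast hr
    have hNN : N*(N-1)/2 ≤ (r:ℝ)*((r:ℝ)-1)/2 := by nlinarith
    have hlm := lam_mul hr
    have hl0 := lam_nonneg hr
    have hch2 : ((r.choose 2 : ℕ):ℝ) = (r:ℝ)*((r:ℝ)-1)/2 := hchoose r
    have hmono : lam r * ((r:ℝ) - 2) ≤ lam r * (W - 2*m) := by
      apply mul_le_mul_of_nonneg_left _ hl0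
      linarith
    have hm2 : (2:ℝ) ≤ m := by exact_mod_cast hm
    calc (∑ S ∈ P, ((a S).choose 2 : ℝ)) + (1/2) * pairSum ≤ N*(N-1)/2 := hLHS
      _ ≤ (r:ℝ)*((r:ℝ)-1)/2 := hNN
      _ ≤ lam r * ((r:ℝ) - 2) + m := by rw [hlm]; rw [hch2]; linarith
      _ ≤ lam r * (W - 2*m) + m := by linarith
  · -- Case A : all degrees < r
    push_neg at hbig
    -- LHS ≤ ∑_j C(d j, 2)
    have hcore : (∑ S ∈ P, ((a S).choose 2 : ℝ)) + (1/2) * pairSum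
        ≤ ∑ j : Fin m, (d j:ℝ)*((d j:ℝ)-1)/2 := by
      have hterm : ∀ S ∈ P, ((a S:ℝ)^2 - (a S:ℝ)) +
          ∑ T ∈ P.filter (fun T => T ≠ S ∧ (S ∩ T).Nonempty), (a S : ℝ) * (a T : ℝ)
          ≤ (∑ T ∈ P, ((S ∩ T).card : ℝ) * ((a S:ℝ) * (a T:ℝ)))
            - (a S:ℝ) * (S.card:ℝ) := by
        intro S hS
        have hc1 : 1 ≤ S.card := hcard S hS
        have hsq : (a S:ℝ) ≤ (a S:ℝ)^2 := by
          have : a S ≤ a S ^ 2 := by nlinarith [Nat.zero_le (a S)]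
          exact_mod_cast this
        have hsplit : ∑ T ∈ P, ((S ∩ T).card : ℝ) * ((a S:ℝ) * (a T:ℝ))
            = (S.card:ℝ) * ((a S:ℝ) * (a S:ℝ))
              + ∑ T ∈ P.erase S, ((S ∩ T).card : ℝ) * ((a S:ℝ) * (a T:ℝ)) := by
          rw [← Finset.add_sum_erase _ _ hS, Finset.inter_self]
        have hsum1 : ∑ T ∈ P.filter (fun T => T ≠ S ∧ (S ∩ T).Nonempty),
            (a S : ℝ) * (a T : ℝ)
            ≤ ∑ T ∈ P.erase S, ((S ∩ T).card : ℝ) * ((a S:ℝ) * (a T:ℝ)) := by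
          have h1 : ∑ T ∈ P.filter (fun T => T ≠ S ∧ (S ∩ T).Nonempty),
              (a S : ℝ) * (a T : ℝ)
              ≤ ∑ T ∈ P.filter (fun T => T ≠ S ∧ (S ∩ T).Nonempty),
                ((S ∩ T).card : ℝ) * ((a S:ℝ) * (a T:ℝ)) := by
            apply Finset.sum_le_sum
            intro T hT
            rw [Finset.mem_filter] at hT
            have h1c : 1 ≤ ((S ∩ T).card : ℝ) := by
              exact_mod_cast Finset.card_pos.mpr hT.2.2
            have h0S : (0:ℝ) ≤ (a S:ℝ) := by positivity
            have h0T : (0:ℝ) ≤ (a T:ℝ) := by positivity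
            nlinarith [mul_nonneg h0S h0T]
          refine h1.trans (Finset.sum_le_sum_of_subset_of_nonneg ?_ fun T _ _ => by positivity)
          intro T hT
          rw [Finset.mem_filter] at hT
          exact Finset.mem_erase.mpr ⟨hT.2.1, hT.1⟩
        have hcS : (1:ℝ) ≤ (S.card:ℝ) := by exact_mod_cast hc1
        have hdiag : (a S:ℝ)^2 - (a S:ℝ) ≤ (S.card:ℝ) * ((a S:ℝ)*(a S:ℝ)) - (a S:ℝ)*(S.card:ℝ) := by
          nlinarith
        rw [hsplit]
        linarith
      have hsummed : (A - N) + pairSum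
          ≤ (∑ S ∈ P, ∑ T ∈ P, ((S ∩ T).card : ℝ) * ((a S:ℝ) * (a T:ℝ))) - W := by
        rw [hA, hN, hW, hpair, ← Finset.sum_sub_distrib, ← Finset.sum_sub_distrib,
          ← Finset.sum_add_distrib]
        exact Finset.sum_le_sum hterm
      rw [hchsum]
      rw [← hDsq, ← hDsum] at hsummed
      have : ∑ j : Fin m, (d j:ℝ)*((d j:ℝ)-1)/2
          = ((∑ j : Fin m, (d j:ℝ)^2) - ∑ j : Fin m, (d j:ℝ))/2 := by
        rw [← Finset.sum_sub_distrib, Finset.sum_div]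
        exact Finset.sum_congr rfl fun j _ => by ring
      rw [this]
      linarith
    have hstep2 : ∑ j : Fin m, (d j:ℝ)*((d j:ℝ)-1)/2 ≤ lam r * (W - 2*m) + m := by
      have hle : ∀ j : Fin m, (d j:ℝ)*((d j:ℝ)-1)/2 ≤ lam r * ((d j:ℝ) - 2) + 1 := by
        intro j
        have := choose_le_lam hr (hdl j) (hbig j)
        rwa [hchoose] at this
      calc ∑ j : Fin m, (d j:ℝ)*((d j:ℝ)-1)/2
          ≤ ∑ j : Fin m, (lam r * ((d j:ℝ) - 2) + 1) := Finset.sum_le_sum fun j _ => hle j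
        _ = lam r * ((∑ j : Fin m, (d j:ℝ)) - 2*m) + m := by
            rw [Finset.sum_add_distrib, Finset.sum_const, Finset.card_univ, Fintype.card_fin,
              ← Finset.mul_sum, Finset.sum_sub_distrib, Finset.sum_const, Finset.card_univ,
              Fintype.card_fin]
            ring
        _ = lam r * (W - 2*m) + m := by rw [hDsum]
    exact hcore.trans hstep2
end

section
/- Let G be a set of edges of the complete graph on a finite vertex set V, and let H = ⟨G⟩_{K_4} be its K_4-bootstrap closure. Then: (i) if A, B ⊆ V are cliques of H (i.e. all edges inside A, respectively inside B, belong to H) with |A ∩ B| ≥ 2, then A ∪ B is a clique of H; and (ii) if A, B, C ⊆ V are cliques of H and there exist distinct vertices u, v, w with u ∈ A ∩ B, v ∈ B ∩ C and w ∈ A ∩ C, then A ∪ B ∪ C is a clique of H. Consequently ⟨G⟩_{K_4} consists of a triangle-free collection of edge-disjoint cliques. -/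
open Finset

/-- The edge set of the copy of `H` under the injection `f`. -/
def copyEdges {W V : Type*} (H : SimpleGraph W) (f : W ↪ V) : Set (Sym2 V) :=
  Sym2.map f '' H.edgeSet

/-- One step of the `H`-bootstrap process: infect every edge `e` for which some copy of `H`
contains `e` and has all its other edges already infected. -/
def bootStep {W V : Type*} (H : SimpleGraph W) (E : Set (Sym2 V)) : Set (Sym2 V) :=
  E ∪ {e | ∃ f : W ↪ V, e ∈ copyEdges H f ∧ copyEdges H f ⊆ insert e E}

/-- The closure of `E` under the `H`-bootstrap process. -/
def bootClosure {W V : Type*} (H : SimpleGraph W) (E : Set (Sym2 V)) : Set (Sym2 V) :=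
  ⋃ t, (bootStep H)^[t] E

/-- `E` percolates in the `H`-bootstrap process on the complete graph on `V`. -/
def Percolates {W V : Type*} (H : SimpleGraph W) (E : Set (Sym2 V)) : Prop :=
  bootClosure H E = (⊤ : SimpleGraph V).edgeSet

/-- The expectation of `X` under the Erdős–Rényi random graph `G_{n,p}`,
written as a sum over all graphs on `[n]`, weighted by their probabilities. -/
noncomputable def gnpExp (n : ℕ) (p : ℝ) (X : Finset (Sym2 (Fin n)) → ℝ) : ℝ :=
  ∑ E ∈ (⊤ : SimpleGraph (Fin n)).edgeFinset.powerset,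
    p ^ E.card * (1 - p) ^ ((⊤ : SimpleGraph (Fin n)).edgeFinset.card - E.card) * X E

/- probability of event `A` under `G_{n,p}` -/
open Classical in
noncomputable def gnpProb (n : ℕ) (p : ℝ) (A : Finset (Sym2 (Fin n)) → Prop) : ℝ :=
  gnpExp n p (fun E => if A E then 1 else 0)

/-- The critical probability for `H`-bootstrap percolation on `K_n`. -/
noncomputable def pc {W : Type*} (n : ℕ) (H : SimpleGraph W) : ℝ :=
  sInf {p : ℝ | p ∈ Set.Icc (0 : ℝ) 1 ∧
    1 / 2 ≤ gnpProb n p (fun E => Percolates H (↑E : Set (Sym2 (Fin n))))}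

section K4aux

variable {V : Type*}

lemma bootStep_subset {W V : Type*} (H : SimpleGraph W) (E : Set (Sym2 V)) :
    E ⊆ bootStep H E := Set.subset_union_left

lemma iterate_mono' {W V : Type*} (H : SimpleGraph W) (E : Set (Sym2 V)) :
    Monotone fun t => (bootStep H)^[t] E := by
  apply monotone_nat_of_le_succ
  intro t
  rw [Function.iterate_succ_apply']
  exact bootStep_subset H _

lemma mem_closure_of_mem {W V : Type*} (H : SimpleGraph W) {E : Set (Sym2 V)}
    {e : Sym2 V} (he : e ∈ E) : e ∈ bootClosure H E :=
  Set.mem_iUnion.2 ⟨0, he⟩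

lemma inj4 {V : Type*} {a b c d : V}
    (hab : a ≠ b) (hac : a ≠ c) (had : a ≠ d) (hbc : b ≠ c) (hbd : b ≠ d) (hcd : c ≠ d) :
    Function.Injective ![a, b, c, d] := by
  intro i j hij
  fin_cases i <;> fin_cases j <;>
    simp only [Matrix.cons_val_zero, Matrix.cons_val_one, Matrix.head_cons,
      Matrix.cons_val_two, Matrix.tail_cons, Matrix.cons_val_three,
      Fin.zero_eta, Fin.mk_one, Fin.isValue] at hij ⊢ <;>
    first
      | rfl
      | exact absurd hij hab | exact absurd hij hac | exact absurd hij had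
      | exact absurd hij hbc | exact absurd hij hbd | exact absurd hij hcd
      | exact absurd hij.symm hab | exact absurd hij.symm hac | exact absurd hij.symm had
      | exact absurd hij.symm hbc | exact absurd hij.symm hbd | exact absurd hij.symm hcd

/-- Key step: if five of the six edges of a potential `K₄` on `a,b,c,d` are in the closure,
so is the sixth. -/
lemma step_mem_closure (G : Set (Sym2 V)) {a b c d : V}
    (hab : a ≠ b) (hac : a ≠ c) (had : a ≠ d) (hbc : b ≠ c) (hbd : b ≠ d) (hcd : c ≠ d)
    (h1 : s(a,c) ∈ bootClosure (SimpleGraph.completeGraph (Fin 4)) G)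
    (h2 : s(a,d) ∈ bootClosure (SimpleGraph.completeGraph (Fin 4)) G)
    (h3 : s(b,c) ∈ bootClosure (SimpleGraph.completeGraph (Fin 4)) G)
    (h4 : s(b,d) ∈ bootClosure (SimpleGraph.completeGraph (Fin 4)) G)
    (h5 : s(c,d) ∈ bootClosure (SimpleGraph.completeGraph (Fin 4)) G) :
    s(a,b) ∈ bootClosure (SimpleGraph.completeGraph (Fin 4)) G := by
  rw [bootClosure, Set.mem_iUnion] at h1 h2 h3 h4 h5
  obtain ⟨t1, h1⟩ := h1
  obtain ⟨t2, h2⟩ := h2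
  obtain ⟨t3, h3⟩ := h3
  obtain ⟨t4, h4⟩ := h4
  obtain ⟨t5, h5⟩ := h5
  set T := max (max (max t1 t2) (max t3 t4)) t5 with hT
  set E := (bootStep (SimpleGraph.completeGraph (Fin 4)))^[T] G with hE
  have hm := iterate_mono' (SimpleGraph.completeGraph (Fin 4)) G
  have e1 : s(a,c) ∈ E := hm (le_trans (le_max_left _ _) (le_trans (le_max_left _ _) (le_max_left _ _))) h1
  have e2 : s(a,d) ∈ E := hm (le_trans (le_max_right _ _) (le_trans (le_max_left _ _) (le_max_left _ _))) h2
  have e3 : s(b,c) ∈ E := hm (le_trans (le_max_left _ _) (le_trans (le_max_right _ _) (le_max_left _ _))) h3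
  have e4 : s(b,d) ∈ E := hm (le_trans (le_max_right _ _) (le_trans (le_max_right _ _) (le_max_left _ _))) h4
  have e5 : s(c,d) ∈ E := hm (le_max_right _ _) h5
  have hf : Function.Injective ![a, b, c, d] := inj4 hab hac had hbc hbd hcd
  let f : Fin 4 ↪ V := ⟨![a, b, c, d], hf⟩
  have hf0 : f 0 = a := rfl
  have hf1 : f 1 = b := rfl
  have hf2 : f 2 = c := rfl
  have hf3 : f 3 = d := rfl
  have hmem : s(a,b) ∈ copyEdges (SimpleGraph.completeGraph (Fin 4)) f := by
    refine ⟨s((0 : Fin 4), 1), ?_, by simp [Sym2.map_pair_eq, hf0, hf1]⟩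
    simp [SimpleGraph.completeGraph, SimpleGraph.mem_edgeSet]
  have e0 : s(b,a) ∈ insert s(a,b) E := by rw [Sym2.eq_swap]; exact Set.mem_insert _ _
  have e1' : s(c,a) ∈ E := by rw [Sym2.eq_swap]; exact e1
  have e2' : s(d,a) ∈ E := by rw [Sym2.eq_swap]; exact e2
  have e3' : s(c,b) ∈ E := by rw [Sym2.eq_swap]; exact e3
  have e4' : s(d,b) ∈ E := by rw [Sym2.eq_swap]; exact e4
  have e5' : s(d,c) ∈ E := by rw [Sym2.eq_swap]; exact e5
  have hsub : copyEdges (SimpleGraph.completeGraph (Fin 4)) f ⊆ insert s(a,b) E := by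
    rintro e ⟨x, hx, rfl⟩
    induction x using Sym2.ind with
    | _ i j =>
      rw [SimpleGraph.mem_edgeSet] at hx
      have hij : i ≠ j := hx.ne
      fin_cases i <;> fin_cases j <;> simp only [Sym2.map_pair_eq] <;>
        first
          | exact absurd rfl hij
          | exact Set.mem_insert _ _
          | exact e0
          | exact Set.mem_insert_of_mem _ e1
          | exact Set.mem_insert_of_mem _ e2
          | exact Set.mem_insert_of_mem _ e3
          | exact Set.mem_insert_of_mem _ e4
          | exact Set.mem_insert_of_mem _ e5
          | exact Set.mem_insert_of_mem _ e1'
          | exact Set.mem_insert_of_mem _ e2'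
          | exact Set.mem_insert_of_mem _ e3'
          | exact Set.mem_insert_of_mem _ e4'
          | exact Set.mem_insert_of_mem _ e5'
  have : s(a,b) ∈ (bootStep (SimpleGraph.completeGraph (Fin 4)))^[T + 1] G := by
    rw [Function.iterate_succ_apply']
    exact Or.inr ⟨f, hmem, hsub⟩
  exact Set.mem_iUnion.2 ⟨T + 1, this⟩

end K4aux

/-- **Observation 18.** Let `H = ⟨G⟩_{K_4}`. (i) If `A, B` are cliques of `H` sharing at
least two vertices, then `A ∪ B` is a clique of `H`; (ii) if `A, B, C` are cliques of `H`
forming a triangle (there are distinct `u ∈ A ∩ B`, `v ∈ B ∩ C`, `w ∈ A ∩ C`), then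
`A ∪ B ∪ C` is a clique of `H`. Consequently `⟨G⟩_{K_4}` consists of a triangle-free
collection of edge-disjoint cliques. -/
theorem K4_closure_cliques {V : Type*} [Fintype V] (G : Set (Sym2 V))
    (IsCl : Set V → Prop)
    (hIsCl : ∀ A : Set V, IsCl A ↔ ∀ u ∈ A, ∀ v ∈ A, u ≠ v →
      s(u, v) ∈ bootClosure (SimpleGraph.completeGraph (Fin 4)) G) :
    (∀ A B : Set V, IsCl A → IsCl B → 2 ≤ (A ∩ B).ncard → IsCl (A ∪ B)) ∧
    (∀ A B C : Set V, IsCl A → IsCl B → IsCl C →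
      (∃ u v w : V, u ≠ v ∧ v ≠ w ∧ u ≠ w ∧ u ∈ A ∩ B ∧ v ∈ B ∩ C ∧ w ∈ A ∩ C) →
      IsCl (A ∪ B ∪ C)) := by
  set H := bootClosure (SimpleGraph.completeGraph (Fin 4)) G with hHdef
  -- the clique condition, stated directly
  set Cl : Set V → Prop := fun S => ∀ u ∈ S, ∀ v ∈ S, u ≠ v → s(u, v) ∈ H with hCl
  have hIsCl' : ∀ A : Set V, IsCl A ↔ Cl A := hIsCl
  -- the main one-sided step
  have main : ∀ A B : Set V, Cl A → Cl B → ∀ x, x ∈ A ∩ B → ∀ y, y ∈ A ∩ B → x ≠ y →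
      ∀ u ∈ A, ∀ v ∈ B, u ≠ v → s(u, v) ∈ H := by
    intro A B hA hB x hx y hy hxy u hu v hv huv
    by_cases hux : u = x
    · exact hB u (hux ▸ hx.2) v hv huv
    by_cases huy : u = y
    · exact hB u (huy ▸ hy.2) v hv huv
    by_cases hvx : v = x
    · exact hA u hu v (hvx ▸ hx.1) huv
    by_cases hvy : v = y
    · exact hA u hu v (hvy ▸ hy.1) huv
    exact step_mem_closure G huv hux huy hvx hvy hxy
      (hA u hu x hx.1 hux) (hA u hu y hy.1 huy)
      (hB v hv x hx.2 hvx) (hB v hv y hy.2 hvy)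
      (hA x hx.1 y hy.1 hxy)
  -- part (i) at the level of `Cl`
  have key : ∀ A B : Set V, Cl A → Cl B → ∀ x, x ∈ A ∩ B → ∀ y, y ∈ A ∩ B → x ≠ y →
      Cl (A ∪ B) := by
    intro A B hA hB x hx y hy hxy u hu v hv huv
    rcases hu with hu | hu <;> rcases hv with hv | hv
    · exact hA u hu v hv huv
    · exact main A B hA hB x hx y hy hxy u hu v hv huv
    · rw [Sym2.eq_swap]
      exact main A B hA hB x hx y hy hxy v hv u hu huv.symm
    · exact hB u hu v hv huv
  -- triangles are cliques
  have tri : ∀ x y z : V, x ≠ y → y ≠ z → x ≠ z →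
      s(x, y) ∈ H → s(y, z) ∈ H → s(x, z) ∈ H → Cl {x, y, z} := by
    intro x y z hxy hyz hxz exy eyz exz p hp q hq hpq
    simp only [Set.mem_insert_iff, Set.mem_singleton_iff] at hp hq
    rcases hp with rfl | rfl | rfl <;> rcases hq with rfl | rfl | rfl <;>
      first
        | exact absurd rfl hpq
        | assumption
        | (rw [Sym2.eq_swap]; assumption)
  constructor
  · intro A B hA hB hcard
    rw [hIsCl'] at hA hB ⊢
    have : 1 < (A ∩ B).ncard := hcard
    rw [Set.one_lt_ncard_iff (A ∩ B).toFinite] at this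
    obtain ⟨x, y, hx, hy, hxy⟩ := this
    exact key A B hA hB x hx y hy hxy
  · intro A B C hA hB hC ⟨u, v, w, huv, hvw, huw, huAB, hvBC, hwAC⟩
    rw [hIsCl'] at hA hB hC ⊢
    have euv : s(u, v) ∈ H := hB u huAB.2 v hvBC.1 huv
    have evw : s(v, w) ∈ H := hC v hvBC.2 w hwAC.2 hvw
    have euw : s(u, w) ∈ H := hA u huAB.1 w hwAC.1 huw
    have hT : Cl {u, v, w} := tri u v w huv hvw huw euv evw euw
    have hAT : Cl (A ∪ {u, v, w}) :=
      key A {u, v, w} hA hT u ⟨huAB.1, by simp⟩ w ⟨hwAC.1, by simp⟩ huw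
    have hBT : Cl (B ∪ {u, v, w}) :=
      key B {u, v, w} hB hT u ⟨huAB.2, by simp⟩ v ⟨hvBC.1, by simp⟩ huv
    have hCT : Cl (C ∪ {u, v, w}) :=
      key C {u, v, w} hC hT v ⟨hvBC.2, by simp⟩ w ⟨hwAC.2, by simp⟩ hvw
    have hABT : Cl (A ∪ {u, v, w} ∪ (B ∪ {u, v, w})) :=
      key _ _ hAT hBT u ⟨Or.inr (by simp), Or.inr (by simp)⟩
        v ⟨Or.inr (by simp), Or.inr (by simp)⟩ huv
    have hABCT : Cl (A ∪ {u, v, w} ∪ (B ∪ {u, v, w}) ∪ (C ∪ {u, v, w})) :=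
      key _ _ hABT hCT v ⟨Or.inl (Or.inr (Or.inr (by simp))), Or.inr (by simp)⟩
        w ⟨Or.inl (Or.inr (Or.inr (by simp))), Or.inr (by simp)⟩ hvw
    intro p hp q hq hpq
    apply hABCT p ?_ q ?_ hpq
    · rcases hp with (hp | hp) | hp
      · exact Or.inl (Or.inl (Or.inl hp))
      · exact Or.inl (Or.inr (Or.inl hp))
      · exact Or.inr (Or.inl hp)
    · rcases hq with (hq | hq) | hq
      · exact Or.inl (Or.inl (Or.inl hq))
      · exact Or.inl (Or.inr (Or.inl hq))
      · exact Or.inr (Or.inl hq)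
end

section
/- Let ℓ ≥ 2 and let G be a graph on ℓ vertices whose K_4-bootstrap closure is the complete graph K_ℓ (i.e. G internally spans K_ℓ). Then G has at least 2ℓ − 3 edges. -/
open Finset

noncomputable def bx {ℓ : ℕ} (k : Fin ℓ) : ℝ := ((k : ℕ) : ℝ)

/-- the `k`-th point on the parabola. -/
noncomputable def bpt {ℓ : ℕ} (k : Fin ℓ) : ℝ × ℝ := (bx k, bx k ^ 2)

/-- rigidity-matrix row of the edge `{i,j}`. -/
noncomputable def bvec {ℓ : ℕ} (i j : Fin ℓ) : Fin ℓ → ℝ × ℝ :=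
  fun k => if k = i then bpt i - bpt j else if k = j then bpt j - bpt i else 0

lemma bvec_symm {ℓ : ℕ} (i j : Fin ℓ) : bvec i j = bvec j i := by
  funext k
  by_cases h1 : k = i <;> by_cases h2 : k = j <;>
    simp_all [bvec]

/-- rigidity row of an unordered edge. -/
noncomputable def bevec {ℓ : ℕ} : Sym2 (Fin ℓ) → (Fin ℓ → ℝ × ℝ) :=
  Sym2.lift ⟨bvec, bvec_symm⟩

@[simp] lemma bevec_mk {ℓ : ℕ} (i j : Fin ℓ) : bevec s(i, j) = bvec i j :=
  Sym2.lift_mk _ i j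

lemma exists_stress {ℓ : ℕ} (f : Fin 4 ↪ Fin ℓ) :
    ∃ t : Fin 4 → ℝ, (∀ i, t i ≠ 0) ∧
      t 0 + t 1 + t 2 + t 3 = 0 ∧
      t 0 * bx (f 0) + t 1 * bx (f 1) + t 2 * bx (f 2) + t 3 * bx (f 3) = 0 ∧
      t 0 * bx (f 0) ^ 2 + t 1 * bx (f 1) ^ 2 + t 2 * bx (f 2) ^ 2 + t 3 * bx (f 3) ^ 2 = 0 := by
  have hx : ∀ i j : Fin 4, i ≠ j → bx (f i) - bx (f j) ≠ 0 := by
    intro i j hij h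
    rw [sub_eq_zero] at h
    exact hij (f.injective (Fin.val_injective (Nat.cast_injective h)))
  set a := bx (f 0); set b := bx (f 1); set c := bx (f 2); set d := bx (f 3)
  refine ⟨![(c - b) * (d - b) * (d - c), -((c - a) * (d - a) * (d - c)),
      (b - a) * (d - a) * (d - b), -((b - a) * (c - a) * (c - b))], ?_, by simp; ring,
      by simp; ring, by simp; ring⟩
  intro i
  fin_cases i <;> simp
  · exact ⟨⟨hx 2 1 (by decide), hx 3 1 (by decide)⟩, hx 3 2 (by decide)⟩
  · exact ⟨⟨hx 2 0 (by decide), hx 3 0 (by decide)⟩, hx 3 2 (by decide)⟩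
  · exact ⟨⟨hx 1 0 (by decide), hx 3 0 (by decide)⟩, hx 3 1 (by decide)⟩
  · exact ⟨⟨hx 1 0 (by decide), hx 2 0 (by decide)⟩, hx 2 1 (by decide)⟩

lemma stress_sum {ℓ : ℕ} (f : Fin 4 ↪ Fin ℓ) (t : Fin 4 → ℝ)
    (h0 : t 0 + t 1 + t 2 + t 3 = 0)
    (h1 : t 0 * bx (f 0) + t 1 * bx (f 1) + t 2 * bx (f 2) + t 3 * bx (f 3) = 0)
    (h2 : t 0 * bx (f 0) ^ 2 + t 1 * bx (f 1) ^ 2 + t 2 * bx (f 2) ^ 2 + t 3 * bx (f 3) ^ 2 = 0) :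
    (t 0 * t 1) • bvec (f 0) (f 1) + (t 0 * t 2) • bvec (f 0) (f 2) +
      (t 0 * t 3) • bvec (f 0) (f 3) + (t 1 * t 2) • bvec (f 1) (f 2) +
      (t 1 * t 3) • bvec (f 1) (f 3) + (t 2 * t 3) • bvec (f 2) (f 3) = 0 := by
  funext k
  simp only [Pi.add_apply, Pi.smul_apply, Pi.zero_apply]
  by_cases hk0 : k = f 0
  · subst hk0
    simp only [bvec, EmbeddingLike.apply_eq_iff_eq]
    norm_num [bpt, Prod.ext_iff, show ((0:Fin 4) = 1) = False by decide, show ((0:Fin 4) = 2) = False by decide, show ((0:Fin 4) = 3) = False by decide, show ((1:Fin 4) = 0) = False by decide, show ((1:Fin 4) = 2) = False by decide, show ((1:Fin 4) = 3) = False by decide, show ((2:Fin 4) = 0) = False by decide, show ((2:Fin 4) = 1) = False by decide, show ((2:Fin 4) = 3) = False by decide, show ((3:Fin 4) = 0) = False by decide, show ((3:Fin 4) = 1) = False by decide, show ((3:Fin 4) = 2) = False by decide]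
    constructor
    · linear_combination (t 0 * bx (f 0)) * h0 - t 0 * h1
    · linear_combination (t 0 * bx (f 0) ^ 2) * h0 - t 0 * h2
  by_cases hk1 : k = f 1
  · subst hk1
    simp only [bvec, EmbeddingLike.apply_eq_iff_eq]
    norm_num [bpt, Prod.ext_iff, show ((0:Fin 4) = 1) = False by decide, show ((0:Fin 4) = 2) = False by decide, show ((0:Fin 4) = 3) = False by decide, show ((1:Fin 4) = 0) = False by decide, show ((1:Fin 4) = 2) = False by decide, show ((1:Fin 4) = 3) = False by decide, show ((2:Fin 4) = 0) = False by decide, show ((2:Fin 4) = 1) = False by decide, show ((2:Fin 4) = 3) = False by decide, show ((3:Fin 4) = 0) = False by decide, show ((3:Fin 4) = 1) = False by decide, show ((3:Fin 4) = 2) = False by decide]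
    constructor
    · linear_combination (t 1 * bx (f 1)) * h0 - t 1 * h1
    · linear_combination (t 1 * bx (f 1) ^ 2) * h0 - t 1 * h2
  by_cases hk2 : k = f 2
  · subst hk2
    simp only [bvec, EmbeddingLike.apply_eq_iff_eq]
    norm_num [bpt, Prod.ext_iff, show ((0:Fin 4) = 1) = False by decide, show ((0:Fin 4) = 2) = False by decide, show ((0:Fin 4) = 3) = False by decide, show ((1:Fin 4) = 0) = False by decide, show ((1:Fin 4) = 2) = False by decide, show ((1:Fin 4) = 3) = False by decide, show ((2:Fin 4) = 0) = False by decide, show ((2:Fin 4) = 1) = False by decide, show ((2:Fin 4) = 3) = False by decide, show ((3:Fin 4) = 0) = False by decide, show ((3:Fin 4) = 1) = False by decide, show ((3:Fin 4) = 2) = False by decide]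
    constructor
    · linear_combination (t 2 * bx (f 2)) * h0 - t 2 * h1
    · linear_combination (t 2 * bx (f 2) ^ 2) * h0 - t 2 * h2
  by_cases hk3 : k = f 3
  · subst hk3
    simp only [bvec, EmbeddingLike.apply_eq_iff_eq]
    norm_num [bpt, Prod.ext_iff, show ((0:Fin 4) = 1) = False by decide, show ((0:Fin 4) = 2) = False by decide, show ((0:Fin 4) = 3) = False by decide, show ((1:Fin 4) = 0) = False by decide, show ((1:Fin 4) = 2) = False by decide, show ((1:Fin 4) = 3) = False by decide, show ((2:Fin 4) = 0) = False by decide, show ((2:Fin 4) = 1) = False by decide, show ((2:Fin 4) = 3) = False by decide, show ((3:Fin 4) = 0) = False by decide, show ((3:Fin 4) = 1) = False by decide, show ((3:Fin 4) = 2) = False by decide]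
    constructor
    · linear_combination (t 3 * bx (f 3)) * h0 - t 3 * h1
    · linear_combination (t 3 * bx (f 3) ^ 2) * h0 - t 3 * h2
  simp [bvec, hk0, hk1, hk2, hk3]


lemma smul_mem_span_helper {M : Type*} [AddCommGroup M] [Module ℝ M] {S : Submodule ℝ M}
    {c : ℝ} {v w : M} (hc : c ≠ 0) (h : c • v + w = 0) (hw : w ∈ S) : v ∈ S := by
  have hv : v = c⁻¹ • (-w) := by
    have h' : c • v = -w := eq_neg_of_add_eq_zero_left h
    rw [← h', smul_smul, inv_mul_cancel₀ hc, one_smul]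
  rw [hv]
  exact S.smul_mem _ (S.neg_mem hw)

lemma bvec_mem_span {ℓ : ℕ} (f : Fin 4 ↪ Fin ℓ) {S : Submodule ℝ (Fin ℓ → ℝ × ℝ)}
    (a b : Fin 4) (hab : a ≠ b)
    (hS : ∀ i j : Fin 4, i ≠ j → s(i, j) ≠ s(a, b) → bvec (f i) (f j) ∈ S) :
    bvec (f a) (f b) ∈ S := by
  obtain ⟨t, tne, h0, h1, h2⟩ := exists_stress f
  have hsum := stress_sum f t h0 h1 h2
  fin_cases a <;> fin_cases b
  · exact absurd rfl hab
  ·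
    refine smul_mem_span_helper (c := t 0 * t 1) (w := (t 0 * t 2) • bvec (f 0) (f 2) + (t 0 * t 3) • bvec (f 0) (f 3) + (t 1 * t 2) • bvec (f 1) (f 2) + (t 1 * t 3) • bvec (f 1) (f 3) + (t 2 * t 3) • bvec (f 2) (f 3))
      (mul_ne_zero (tne 0) (tne 1)) (by rw [← hsum]; simp only [Fin.reduceFinMk]; abel) ?_
    exact add_mem (add_mem (add_mem (add_mem (S.smul_mem _ (hS 0 2 (by decide) (by decide))) (S.smul_mem _ (hS 0 3 (by decide) (by decide)))) (S.smul_mem _ (hS 1 2 (by decide) (by decide)))) (S.smul_mem _ (hS 1 3 (by decide) (by decide)))) (S.smul_mem _ (hS 2 3 (by decide) (by decide)))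
  ·
    refine smul_mem_span_helper (c := t 0 * t 2) (w := (t 0 * t 1) • bvec (f 0) (f 1) + (t 0 * t 3) • bvec (f 0) (f 3) + (t 1 * t 2) • bvec (f 1) (f 2) + (t 1 * t 3) • bvec (f 1) (f 3) + (t 2 * t 3) • bvec (f 2) (f 3))
      (mul_ne_zero (tne 0) (tne 2)) (by rw [← hsum]; simp only [Fin.reduceFinMk]; abel) ?_
    exact add_mem (add_mem (add_mem (add_mem (S.smul_mem _ (hS 0 1 (by decide) (by decide))) (S.smul_mem _ (hS 0 3 (by decide) (by decide)))) (S.smul_mem _ (hS 1 2 (by decide) (by decide)))) (S.smul_mem _ (hS 1 3 (by decide) (by decide)))) (S.smul_mem _ (hS 2 3 (by decide) (by decide)))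
  ·
    refine smul_mem_span_helper (c := t 0 * t 3) (w := (t 0 * t 1) • bvec (f 0) (f 1) + (t 0 * t 2) • bvec (f 0) (f 2) + (t 1 * t 2) • bvec (f 1) (f 2) + (t 1 * t 3) • bvec (f 1) (f 3) + (t 2 * t 3) • bvec (f 2) (f 3))
      (mul_ne_zero (tne 0) (tne 3)) (by rw [← hsum]; simp only [Fin.reduceFinMk]; abel) ?_
    exact add_mem (add_mem (add_mem (add_mem (S.smul_mem _ (hS 0 1 (by decide) (by decide))) (S.smul_mem _ (hS 0 2 (by decide) (by decide)))) (S.smul_mem _ (hS 1 2 (by decide) (by decide)))) (S.smul_mem _ (hS 1 3 (by decide) (by decide)))) (S.smul_mem _ (hS 2 3 (by decide) (by decide)))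
  ·
    rw [bvec_symm]
    refine smul_mem_span_helper (c := t 0 * t 1) (w := (t 0 * t 2) • bvec (f 0) (f 2) + (t 0 * t 3) • bvec (f 0) (f 3) + (t 1 * t 2) • bvec (f 1) (f 2) + (t 1 * t 3) • bvec (f 1) (f 3) + (t 2 * t 3) • bvec (f 2) (f 3))
      (mul_ne_zero (tne 0) (tne 1)) (by rw [← hsum]; simp only [Fin.reduceFinMk]; abel) ?_
    exact add_mem (add_mem (add_mem (add_mem (S.smul_mem _ (hS 0 2 (by decide) (by decide))) (S.smul_mem _ (hS 0 3 (by decide) (by decide)))) (S.smul_mem _ (hS 1 2 (by decide) (by decide)))) (S.smul_mem _ (hS 1 3 (by decide) (by decide)))) (S.smul_mem _ (hS 2 3 (by decide) (by decide)))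
  · exact absurd rfl hab
  ·
    refine smul_mem_span_helper (c := t 1 * t 2) (w := (t 0 * t 1) • bvec (f 0) (f 1) + (t 0 * t 2) • bvec (f 0) (f 2) + (t 0 * t 3) • bvec (f 0) (f 3) + (t 1 * t 3) • bvec (f 1) (f 3) + (t 2 * t 3) • bvec (f 2) (f 3))
      (mul_ne_zero (tne 1) (tne 2)) (by rw [← hsum]; simp only [Fin.reduceFinMk]; abel) ?_
    exact add_mem (add_mem (add_mem (add_mem (S.smul_mem _ (hS 0 1 (by decide) (by decide))) (S.smul_mem _ (hS 0 2 (by decide) (by decide)))) (S.smul_mem _ (hS 0 3 (by decide) (by decide)))) (S.smul_mem _ (hS 1 3 (by decide) (by decide)))) (S.smul_mem _ (hS 2 3 (by decide) (by decide)))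
  ·
    refine smul_mem_span_helper (c := t 1 * t 3) (w := (t 0 * t 1) • bvec (f 0) (f 1) + (t 0 * t 2) • bvec (f 0) (f 2) + (t 0 * t 3) • bvec (f 0) (f 3) + (t 1 * t 2) • bvec (f 1) (f 2) + (t 2 * t 3) • bvec (f 2) (f 3))
      (mul_ne_zero (tne 1) (tne 3)) (by rw [← hsum]; simp only [Fin.reduceFinMk]; abel) ?_
    exact add_mem (add_mem (add_mem (add_mem (S.smul_mem _ (hS 0 1 (by decide) (by decide))) (S.smul_mem _ (hS 0 2 (by decide) (by decide)))) (S.smul_mem _ (hS 0 3 (by decide) (by decide)))) (S.smul_mem _ (hS 1 2 (by decide) (by decide)))) (S.smul_mem _ (hS 2 3 (by decide) (by decide)))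
  ·
    rw [bvec_symm]
    refine smul_mem_span_helper (c := t 0 * t 2) (w := (t 0 * t 1) • bvec (f 0) (f 1) + (t 0 * t 3) • bvec (f 0) (f 3) + (t 1 * t 2) • bvec (f 1) (f 2) + (t 1 * t 3) • bvec (f 1) (f 3) + (t 2 * t 3) • bvec (f 2) (f 3))
      (mul_ne_zero (tne 0) (tne 2)) (by rw [← hsum]; simp only [Fin.reduceFinMk]; abel) ?_
    exact add_mem (add_mem (add_mem (add_mem (S.smul_mem _ (hS 0 1 (by decide) (by decide))) (S.smul_mem _ (hS 0 3 (by decide) (by decide)))) (S.smul_mem _ (hS 1 2 (by decide) (by decide)))) (S.smul_mem _ (hS 1 3 (by decide) (by decide)))) (S.smul_mem _ (hS 2 3 (by decide) (by decide)))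
  ·
    rw [bvec_symm]
    refine smul_mem_span_helper (c := t 1 * t 2) (w := (t 0 * t 1) • bvec (f 0) (f 1) + (t 0 * t 2) • bvec (f 0) (f 2) + (t 0 * t 3) • bvec (f 0) (f 3) + (t 1 * t 3) • bvec (f 1) (f 3) + (t 2 * t 3) • bvec (f 2) (f 3))
      (mul_ne_zero (tne 1) (tne 2)) (by rw [← hsum]; simp only [Fin.reduceFinMk]; abel) ?_
    exact add_mem (add_mem (add_mem (add_mem (S.smul_mem _ (hS 0 1 (by decide) (by decide))) (S.smul_mem _ (hS 0 2 (by decide) (by decide)))) (S.smul_mem _ (hS 0 3 (by decide) (by decide)))) (S.smul_mem _ (hS 1 3 (by decide) (by decide)))) (S.smul_mem _ (hS 2 3 (by decide) (by decide)))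
  · exact absurd rfl hab
  ·
    refine smul_mem_span_helper (c := t 2 * t 3) (w := (t 0 * t 1) • bvec (f 0) (f 1) + (t 0 * t 2) • bvec (f 0) (f 2) + (t 0 * t 3) • bvec (f 0) (f 3) + (t 1 * t 2) • bvec (f 1) (f 2) + (t 1 * t 3) • bvec (f 1) (f 3))
      (mul_ne_zero (tne 2) (tne 3)) (by rw [← hsum]; simp only [Fin.reduceFinMk]; abel) ?_
    exact add_mem (add_mem (add_mem (add_mem (S.smul_mem _ (hS 0 1 (by decide) (by decide))) (S.smul_mem _ (hS 0 2 (by decide) (by decide)))) (S.smul_mem _ (hS 0 3 (by decide) (by decide)))) (S.smul_mem _ (hS 1 2 (by decide) (by decide)))) (S.smul_mem _ (hS 1 3 (by decide) (by decide)))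
  ·
    rw [bvec_symm]
    refine smul_mem_span_helper (c := t 0 * t 3) (w := (t 0 * t 1) • bvec (f 0) (f 1) + (t 0 * t 2) • bvec (f 0) (f 2) + (t 1 * t 2) • bvec (f 1) (f 2) + (t 1 * t 3) • bvec (f 1) (f 3) + (t 2 * t 3) • bvec (f 2) (f 3))
      (mul_ne_zero (tne 0) (tne 3)) (by rw [← hsum]; simp only [Fin.reduceFinMk]; abel) ?_
    exact add_mem (add_mem (add_mem (add_mem (S.smul_mem _ (hS 0 1 (by decide) (by decide))) (S.smul_mem _ (hS 0 2 (by decide) (by decide)))) (S.smul_mem _ (hS 1 2 (by decide) (by decide)))) (S.smul_mem _ (hS 1 3 (by decide) (by decide)))) (S.smul_mem _ (hS 2 3 (by decide) (by decide)))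
  ·
    rw [bvec_symm]
    refine smul_mem_span_helper (c := t 1 * t 3) (w := (t 0 * t 1) • bvec (f 0) (f 1) + (t 0 * t 2) • bvec (f 0) (f 2) + (t 0 * t 3) • bvec (f 0) (f 3) + (t 1 * t 2) • bvec (f 1) (f 2) + (t 2 * t 3) • bvec (f 2) (f 3))
      (mul_ne_zero (tne 1) (tne 3)) (by rw [← hsum]; simp only [Fin.reduceFinMk]; abel) ?_
    exact add_mem (add_mem (add_mem (add_mem (S.smul_mem _ (hS 0 1 (by decide) (by decide))) (S.smul_mem _ (hS 0 2 (by decide) (by decide)))) (S.smul_mem _ (hS 0 3 (by decide) (by decide)))) (S.smul_mem _ (hS 1 2 (by decide) (by decide)))) (S.smul_mem _ (hS 2 3 (by decide) (by decide)))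
  ·
    rw [bvec_symm]
    refine smul_mem_span_helper (c := t 2 * t 3) (w := (t 0 * t 1) • bvec (f 0) (f 1) + (t 0 * t 2) • bvec (f 0) (f 2) + (t 0 * t 3) • bvec (f 0) (f 3) + (t 1 * t 2) • bvec (f 1) (f 2) + (t 1 * t 3) • bvec (f 1) (f 3))
      (mul_ne_zero (tne 2) (tne 3)) (by rw [← hsum]; simp only [Fin.reduceFinMk]; abel) ?_
    exact add_mem (add_mem (add_mem (add_mem (S.smul_mem _ (hS 0 1 (by decide) (by decide))) (S.smul_mem _ (hS 0 2 (by decide) (by decide)))) (S.smul_mem _ (hS 0 3 (by decide) (by decide)))) (S.smul_mem _ (hS 1 2 (by decide) (by decide)))) (S.smul_mem _ (hS 1 3 (by decide) (by decide)))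
  · exact absurd rfl hab

lemma boot_step_span {ℓ : ℕ} (S : Submodule ℝ (Fin ℓ → ℝ × ℝ)) (E : Set (Sym2 (Fin ℓ)))
    (hE : ∀ e ∈ E, bevec e ∈ S) :
    ∀ e ∈ bootStep (SimpleGraph.completeGraph (Fin 4)) E, bevec e ∈ S := by
  rintro e (he | ⟨f, hec, hsub⟩)
  · exact hE e he
  obtain ⟨e₀, he₀, rfl⟩ := hec
  induction e₀ using Sym2.ind with
  | _ a b =>
    have hab : a ≠ b := by simpa using he₀
    rw [Sym2.map_pair_eq, bevec_mk]
    apply bvec_mem_span f a b hab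
    intro i j hij hne
    have h1 : (s(f i, f j) : Sym2 (Fin ℓ)) ∈ copyEdges (SimpleGraph.completeGraph (Fin 4)) f :=
      ⟨s(i, j), by simpa using hij, Sym2.map_pair_eq f i j⟩
    rcases hsub h1 with h2 | h2
    · exfalso
      rw [← Sym2.map_pair_eq f i j] at h2
      exact hne (Sym2.map.injective f.injective h2)
    · have := hE _ h2
      rwa [bevec_mk] at this

lemma boot_closure_span {ℓ : ℕ} (E : Set (Sym2 (Fin ℓ))) :
    ∀ e ∈ bootClosure (SimpleGraph.completeGraph (Fin 4)) E,
      bevec e ∈ Submodule.span ℝ (bevec '' E) := by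
  intro e he
  rw [bootClosure, Set.mem_iUnion] at he
  obtain ⟨n, hn⟩ := he
  induction n generalizing e with
  | zero => exact Submodule.subset_span ⟨e, hn, rfl⟩
  | succ n ih =>
    rw [Function.iterate_succ_apply'] at hn
    exact boot_step_span _ _ (fun e' he' => ih e' he') e hn

lemma indep_family {ℓ : ℕ} (z0 z1 : Fin ℓ) (em : Fin (ℓ - 2) → Fin ℓ)
    (hz0 : (z0 : ℕ) = 0) (hz1 : (z1 : ℕ) = 1) (hem : ∀ i, (em i : ℕ) = i.val + 2) :
    LinearIndependent ℝ (Sum.elim (fun _ : Unit => bvec z0 z1)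
      (fun p : Fin 2 × Fin (ℓ - 2) => bvec (if p.1 = 0 then z0 else z1) (em p.2))) := by
  have hz01 : z0 ≠ z1 := fun h => by rw [Fin.ext_iff, hz0, hz1] at h; omega
  have hne0 : ∀ j : Fin (ℓ - 2), em j ≠ z0 := fun j h => by
    rw [Fin.ext_iff, hem, hz0] at h; omega
  have hne1 : ∀ j : Fin (ℓ - 2), em j ≠ z1 := fun j h => by
    rw [Fin.ext_iff, hem, hz1] at h; omega
  have heminj : ∀ j1 j2 : Fin (ℓ - 2), em j1 = em j2 ↔ j1 = j2 := by
    intro j1 j2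
    constructor
    · intro h; rw [Fin.ext_iff, hem, hem] at h; exact Fin.ext (by omega)
    · rintro rfl; rfl
  have hbx0 : bx z0 = 0 := by simp [bx, hz0]
  have hbx1 : bx z1 = 1 := by simp [bx, hz1]
  rw [Fintype.linearIndependent_iff]
  intro g hg
  have hEval : ∀ k : Fin ℓ,
      g (Sum.inl ()) • bvec z0 z1 k +
        ∑ p : Fin 2 × Fin (ℓ - 2),
          g (Sum.inr p) • bvec (if p.1 = 0 then z0 else z1) (em p.2) k = 0 := by
    intro k
    have h := congrFun hg k
    simpa [Fintype.sum_sum_type, Finset.sum_apply, Pi.smul_apply] using h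
  have key : ∀ q : Fin 2 × Fin (ℓ - 2), g (Sum.inr q) = 0 := by
    rintro ⟨a, j⟩
    have h := hEval (em j)
    rw [Fintype.sum_prod_type, Fin.sum_univ_two] at h
    simp [bvec, hne0 j, hne1 j, heminj, smul_ite] at h
    have hu : (2 : ℝ) ≤ bx (em j) := by
      simp only [bx, hem]
      push_cast
      have := Nat.cast_nonneg (α := ℝ) j.val
      linarith
    rw [Prod.ext_iff] at h
    simp only [bpt, hbx0, hbx1, Prod.smul_mk, Prod.mk_sub_mk, Prod.fst_add, Prod.snd_add,
      Prod.fst_zero, Prod.snd_zero, Prod.smul_fst, Prod.smul_snd, Prod.fst_sub, Prod.snd_sub,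
      smul_eq_mul] at h
    obtain ⟨e1, e2⟩ := h
    have hb : g (Sum.inr (1, j)) = 0 := by
      have hb' : g (Sum.inr (1, j)) * (bx (em j) - 1) = 0 := by
        linear_combination e2 - bx (em j) * e1
      exact (mul_eq_zero.mp hb').resolve_right (by intro hx; rw [sub_eq_zero] at hx; linarith)
    have ha : g (Sum.inr (0, j)) = 0 := by
      have ha' : g (Sum.inr (0, j)) * bx (em j) = 0 := by
        linear_combination e1 - (bx (em j) - 1) * hb
      exact (mul_eq_zero.mp ha').resolve_right (by intro hx; linarith)
    fin_cases a
    · exact ha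
    · exact hb
  have keyl : g (Sum.inl ()) = 0 := by
    have h := hEval z0
    simp only [key, zero_smul, Finset.sum_const_zero, add_zero] at h
    simp [bvec, bpt, hbx0, hbx1, hz01, Prod.ext_iff] at h
    exact h
  rintro (u | q)
  · exact keyl
  · exact key q

/-- **Lemma 20 (Bollobás).** If `ℓ ≥ 2` and the `K_4`-bootstrap closure of a graph `G`
on `ℓ` vertices is the complete graph `K_ℓ`, then `G` has at least `2ℓ - 3` edges. -/
theorem internally_spanned_min_edges (ℓ : ℕ) (hℓ : 2 ≤ ℓ) (G : SimpleGraph (Fin ℓ))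
    (h : bootClosure (SimpleGraph.completeGraph (Fin 4)) G.edgeSet =
      (⊤ : SimpleGraph (Fin ℓ)).edgeSet) :
    2 * ℓ - 3 ≤ G.edgeSet.ncard := by
  classical
  set S := Submodule.span ℝ (bevec '' G.edgeSet) with hSdef
  have hmem : ∀ i j : Fin ℓ, i ≠ j → bvec i j ∈ S := by
    intro i j hij
    have he : (s(i, j) : Sym2 (Fin ℓ)) ∈ bootClosure (SimpleGraph.completeGraph (Fin 4)) G.edgeSet := by
      rw [h]; simpa using hij
    have := boot_closure_span G.edgeSet _ he
    rwa [bevec_mk] at this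
  set z0 : Fin ℓ := ⟨0, by omega⟩ with hz0eq
  set z1 : Fin ℓ := ⟨1, by omega⟩ with hz1eq
  set em : Fin (ℓ - 2) → Fin ℓ := fun i => ⟨i.val + 2, by have := i.isLt; omega⟩ with hemeq
  set fam := Sum.elim (fun _ : Unit => bvec z0 z1)
      (fun p : Fin 2 × Fin (ℓ - 2) => bvec (if p.1 = 0 then z0 else z1) (em p.2)) with hfam
  have li : LinearIndependent ℝ fam := indep_family z0 z1 em rfl rfl (fun i => rfl)
  have hrange : Set.range fam ⊆ ↑S := by
    rintro v ⟨x, rfl⟩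
    rcases x with u | ⟨a, j⟩
    · exact hmem z0 z1 (by simp [hz0eq, hz1eq, Fin.ext_iff])
    · refine hmem _ _ ?_
      by_cases ha : a = 0 <;>
        simp [hfam, ha, hz0eq, hz1eq, hemeq, Fin.ext_iff]
  have card : Fintype.card (Unit ⊕ Fin 2 × Fin (ℓ - 2)) = 2 * ℓ - 3 := by
    simp only [Fintype.card_sum, Fintype.card_prod, Fintype.card_unit, Fintype.card_fin]
    omega
  have e1 : Module.finrank ℝ (Submodule.span ℝ (Set.range fam)) = 2 * ℓ - 3 := by
    rw [finrank_span_eq_card li, card]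
  have e2 : Module.finrank ℝ (Submodule.span ℝ (Set.range fam)) ≤ Module.finrank ℝ S :=
    Submodule.finrank_mono (Submodule.span_le.mpr hrange)
  have hfin : (bevec '' G.edgeSet).Finite := (Set.toFinite _).image _
  haveI := hfin.fintype
  have e3 : Module.finrank ℝ S ≤ (bevec '' G.edgeSet).toFinset.card := by
    rw [hSdef]; exact finrank_span_le_card _
  have e4 : (bevec '' G.edgeSet).toFinset.card = (bevec '' G.edgeSet).ncard :=
    (Set.ncard_eq_toFinset_card' _).symm
  have e5 : (bevec '' G.edgeSet).ncard ≤ G.edgeSet.ncard := Set.ncard_image_le (Set.toFinite _)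
  omega
end

section
/- Let G be a graph on vertex set [n] whose K_4-bootstrap closure is the complete graph K_n, and let 1 ≤ L ≤ n. Then there exists a subset A ⊆ [n] with L ≤ |A| ≤ 3L such that the K_4-bootstrap closure of the edges of G inside A (computed in the complete graph on A) is the complete graph on A. -/
open Finset

/-- The complete graph on `A ⊆ V` is internally spanned by the edge set `E`: the
`K_4`-bootstrap closure, computed inside the complete graph on `A`, of the set of edges
of `E` lying inside `A`, is the complete graph on `A`. -/
def IntSpanned {V : Type*} (E : Set (Sym2 V)) (A : Set V) : Prop :=
  bootClosure (SimpleGraph.completeGraph (Fin 4))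
      {e : Sym2 A | Sym2.map (Subtype.val : A → V) e ∈ E} =
    (⊤ : SimpleGraph A).edgeSet

set_option linter.unusedSectionVars false
set_option linter.unreachableTactic false
set_option linter.unusedTactic false

section Basic

variable {W V : Type*} {H : SimpleGraph W} {E F : Set (Sym2 V)}

lemma subset_bootStep : E ⊆ bootStep H E := Set.subset_union_left

lemma bootStep_mono (h : E ⊆ F) : bootStep H E ⊆ bootStep H F := by
  rintro e (he | ⟨f, h1, h2⟩)
  · exact Or.inl (h he)
  · exact Or.inr ⟨f, h1, h2.trans (Set.insert_subset_insert h)⟩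

lemma iter_mono (h : E ⊆ F) (t : ℕ) : (bootStep H)^[t] E ⊆ (bootStep H)^[t] F := by
  induction t generalizing E F with
  | zero => exact h
  | succ t ih =>
    rw [Function.iterate_succ_apply, Function.iterate_succ_apply]
    exact ih (bootStep_mono h)

lemma subset_iter (t : ℕ) : E ⊆ (bootStep H)^[t] E := by
  induction t with
  | zero => rfl
  | succ t ih =>
    rw [Function.iterate_succ_apply']
    exact ih.trans subset_bootStep

lemma iter_le_iter {s t : ℕ} (h : s ≤ t) : (bootStep H)^[s] E ⊆ (bootStep H)^[t] E := by
  obtain ⟨k, rfl⟩ := Nat.exists_eq_add_of_le h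
  rw [Nat.add_comm, Function.iterate_add_apply]
  exact subset_iter k

lemma subset_bootClosure : E ⊆ bootClosure H E :=
  le_trans (subset_iter 0) (Set.subset_iUnion (fun t => (bootStep H)^[t] E) 0)

lemma iter_subset_bootClosure (t : ℕ) : (bootStep H)^[t] E ⊆ bootClosure H E :=
  Set.subset_iUnion (fun t => (bootStep H)^[t] E) t

lemma bootClosure_mono (h : E ⊆ F) : bootClosure H E ⊆ bootClosure H F :=
  Set.iUnion_mono fun t => iter_mono h t

lemma bootStep_bootClosure [Finite W] :
    bootStep H (bootClosure H E) ⊆ bootClosure H E := by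
  rintro e (he | ⟨f, h1, h2⟩)
  · exact he
  · have hfin : (copyEdges H f \ {e}).Finite := by
      have : (copyEdges H f).Finite := by
        have : Finite (Sym2 W) := by infer_instance
        exact Set.Finite.image _ (Set.toFinite _)
      exact this.diff
    have : ∃ t, copyEdges H f \ {e} ⊆ (bootStep H)^[t] E := by
      refine Set.Finite.induction_on_subset (motive := fun s _ => ∃ t, s ⊆ (bootStep H)^[t] E) _ hfin ⟨0, by simp⟩ ?_
      rintro a s haS _ _ ⟨t, ht⟩
      have haE : a ∈ bootClosure H E := by
        rcases h2 haS.1 with h | h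
        · exact absurd h haS.2
        · exact h
      obtain ⟨t', ht'⟩ := Set.mem_iUnion.mp haE
      exact ⟨max t t', Set.insert_subset (iter_le_iter (le_max_right t t') ht')
        (ht.trans (iter_le_iter (le_max_left t t')))⟩
    obtain ⟨t, ht⟩ := this
    have : e ∈ (bootStep H)^[t+1] E := by
      rw [Function.iterate_succ_apply']
      refine Or.inr ⟨f, h1, ?_⟩
      intro x hx
      by_cases hxe : x = e
      · exact hxe ▸ Set.mem_insert _ _
      · exact Set.mem_insert_of_mem _ (ht ⟨hx, hxe⟩)
    exact iter_subset_bootClosure (t+1) this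

lemma bootClosure_of_subset_closure [Finite W] (h : F ⊆ bootClosure H E) :
    bootClosure H F ⊆ bootClosure H E := by
  refine Set.iUnion_subset fun t => ?_
  induction t with
  | zero => exact h
  | succ t ih =>
    rw [Function.iterate_succ_apply']
    exact le_trans (bootStep_mono ih) bootStep_bootClosure

end Basic

section K4
variable {V : Type*} [DecidableEq V]

lemma k4_new {E : Set (Sym2 V)} {a b c d : V}
    (hab : a ≠ b) (hac : a ≠ c) (had : a ≠ d) (hbc : b ≠ c) (hbd : b ≠ d) (hcd : c ≠ d)
    (h1 : s(a,c) ∈ E) (h2 : s(a,d) ∈ E) (h3 : s(b,c) ∈ E) (h4 : s(b,d) ∈ E)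
    (h5 : s(c,d) ∈ E) :
    s(a,b) ∈ bootStep (SimpleGraph.completeGraph (Fin 4)) E := by
  have hinj : Function.Injective ![a,b,c,d] := by
    intro i j hij
    fin_cases i <;> fin_cases j <;> simp_all [hab, hac, had, hbc, hbd, hcd] <;>
      first
        | rfl
        | (exfalso; first
            | exact hab hij.symm | exact hac hij.symm | exact had hij.symm
            | exact hbc hij.symm | exact hbd hij.symm | exact hcd hij.symm)
  refine Or.inr ⟨⟨![a,b,c,d], hinj⟩, ⟨s(0,1), ?_, ?_⟩, ?_⟩
  · simp [SimpleGraph.completeGraph, SimpleGraph.mem_edgeSet]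
  · rw [Sym2.map_pair_eq]; rfl
  · rintro x ⟨p, hp, rfl⟩
    induction p using Sym2.ind with
    | _ i j =>
      have hij : i ≠ j := by simpa [SimpleGraph.completeGraph, SimpleGraph.mem_edgeSet] using hp
      rw [Sym2.map_pair_eq]
      simp only [Function.Embedding.coeFn_mk]
      fin_cases i <;> fin_cases j <;> simp_all <;>
        first
          | exact Or.inl rfl
          | exact Or.inr h1 | exact Or.inr h2 | exact Or.inr h3 | exact Or.inr h4
          | exact Or.inr h5
          | (rw [Sym2.eq_swap]; first
              | exact Or.inl rfl
              | exact Or.inr h1 | exact Or.inr h2 | exact Or.inr h3 | exact Or.inr h4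
              | exact Or.inr h5)

end K4

section Clique
variable {V : Type*} [DecidableEq V]

/-- All edges inside `A` belong to the `K₄`-closure of `Z`. -/
def Fcl (Z : Set (Sym2 V)) (A : Finset V) : Prop :=
  ∀ u ∈ A, ∀ v ∈ A, u ≠ v → s(u,v) ∈ bootClosure (SimpleGraph.completeGraph (Fin 4)) Z

lemma Fcl.mono {Z Z' : Set (Sym2 V)} {A : Finset V} (h : Z ⊆ Z') (hA : Fcl Z A) :
    Fcl Z' A := fun u hu v hv huv => bootClosure_mono h (hA u hu v hv huv)

lemma Fcl.subset {Z : Set (Sym2 V)} {A B : Finset V} (h : B ⊆ A) (hA : Fcl Z A) :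
    Fcl Z B := fun u hu v hv huv => hA u (h hu) v (h hv) huv

lemma Fcl_union {Z : Set (Sym2 V)} {X Y : Finset V} {a b : V}
    (hX : Fcl Z X) (hY : Fcl Z Y) (hab : a ≠ b)
    (haX : a ∈ X) (hbX : b ∈ X) (haY : a ∈ Y) (hbY : b ∈ Y) :
    Fcl Z (X ∪ Y) := by
  have core : ∀ u ∈ X, ∀ v ∈ Y, u ≠ v →
      s(u,v) ∈ bootClosure (SimpleGraph.completeGraph (Fin 4)) Z := by
    intro u hu v hv huv
    by_cases huY : u ∈ Y
    · exact hY u huY v hv huv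
    by_cases hvX : v ∈ X
    · exact hX u hu v hvX huv
    have hua : u ≠ a := fun h => huY (h ▸ haY)
    have hub : u ≠ b := fun h => huY (h ▸ hbY)
    have hva : v ≠ a := fun h => hvX (h ▸ haX)
    have hvb : v ≠ b := fun h => hvX (h ▸ hbX)
    exact bootStep_bootClosure (k4_new huv hua hub hva hvb hab
      (hX u hu a haX hua) (hX u hu b hbX hub) (hY v hv a haY hva) (hY v hv b hbY hvb)
      (hX a haX b hbX hab))
  intro u hu v hv huv
  rcases Finset.mem_union.mp hu with hu' | hu' <;> rcases Finset.mem_union.mp hv with hv' | hv'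
  · exact hX u hu' v hv' huv
  · exact core u hu' v hv' huv
  · rw [Sym2.eq_swap]; exact core v hv' u hu' huv.symm
  · exact hY u hu' v hv' huv

lemma Fcl_insert {Z : Set (Sym2 V)} {X : Finset V} {a b c : V} (hX : Fcl Z X)
    (hb : b ∈ X) (hc : c ∈ X) (hbc : b ≠ c)
    (hab : s(a,b) ∈ bootClosure (SimpleGraph.completeGraph (Fin 4)) Z)
    (hac : s(a,c) ∈ bootClosure (SimpleGraph.completeGraph (Fin 4)) Z) :
    Fcl Z (insert a X) := by
  have core : ∀ v ∈ X, a ≠ v → s(a,v) ∈ bootClosure (SimpleGraph.completeGraph (Fin 4)) Z := by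
    intro v hv hav
    by_cases hvb : v = b
    · exact hvb ▸ hab
    by_cases hvc : v = c
    · exact hvc ▸ hac
    by_cases haX : a ∈ X
    · exact hX a haX v hv hav
    have hab' : a ≠ b := fun h => haX (h ▸ hb)
    have hac' : a ≠ c := fun h => haX (h ▸ hc)
    exact bootStep_bootClosure (k4_new hav hab' hac' hvb hvc hbc
      hab hac (hX v hv b hb hvb) (hX v hv c hc hvc) (hX b hb c hc hbc))
  intro u hu v hv huv
  rcases Finset.mem_insert.mp hu with hu' | hu' <;> rcases Finset.mem_insert.mp hv with hv' | hv'
  · exact absurd (hu'.trans hv'.symm) huv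
  · exact hu' ▸ core v hv' (hu' ▸ huv)
  · rw [Sym2.eq_swap]; exact hv' ▸ core u hu' (hv' ▸ huv.symm)
  · exact hX u hu' v hv' huv

lemma Fcl_triangle {Z : Set (Sym2 V)} {A B C : Finset V} {a b c : V}
    (hA : Fcl Z A) (hB : Fcl Z B) (hC : Fcl Z C)
    (hab : a ≠ b) (hac : a ≠ c) (hbc : b ≠ c)
    (haA : a ∈ A) (hbA : b ∈ A) (haB : a ∈ B) (hcB : c ∈ B) (hbC : b ∈ C) (hcC : c ∈ C) :
    Fcl Z (A ∪ B ∪ C) := by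
  have eab := hA a haA b hbA hab
  have eac := hB a haB c hcB hac
  have ebc := hC b hbC c hcC hbc
  have hA' : Fcl Z (insert c A) :=
    Fcl_insert hA haA hbA hab (by rw [Sym2.eq_swap]; exact eac) (by rw [Sym2.eq_swap]; exact ebc)
  have hB' : Fcl Z (insert b B) :=
    Fcl_insert hB haB hcB hac (by rw [Sym2.eq_swap]; exact eab) ebc
  have hC' : Fcl Z (insert a C) :=
    Fcl_insert hC hbC hcC hbc eab eac
  have hAB : Fcl Z (insert c A ∪ insert b B) :=
    Fcl_union hA' hB' hab (Finset.mem_insert_of_mem haA) (Finset.mem_insert_of_mem hbA)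
      (Finset.mem_insert_of_mem haB) (Finset.mem_insert_self b B)
  have hABC : Fcl Z (insert c A ∪ insert b B ∪ insert a C) :=
    Fcl_union hAB hC' hbc
      (Finset.mem_union_left _ (Finset.mem_insert_of_mem hbA))
      (Finset.mem_union_left _ (Finset.mem_insert_self c A))
      (Finset.mem_insert_of_mem hbC) (Finset.mem_insert_of_mem hcC)
  refine hABC.subset ?_
  intro x hx
  simp only [Finset.mem_union, Finset.mem_insert] at hx ⊢
  tauto

end Clique

section Span
variable {V : Type*} [DecidableEq V]

/-- The edges of `E` lying inside `A`. -/
def res (E : Set (Sym2 V)) (A : Set V) : Set (Sym2 V) := {e ∈ E | ∀ v ∈ e, v ∈ A}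

lemma res_mono_right {E : Set (Sym2 V)} {A B : Set V} (h : A ⊆ B) : res E A ⊆ res E B :=
  fun _ he => ⟨he.1, fun v hv => h (he.2 v hv)⟩

/-- `A` is internally spanned (ambient formulation). -/
def Spans (E : Set (Sym2 V)) (A : Finset V) : Prop := Fcl (res E ↑A) A

/-- Inductively generated family of internally spanned sets. -/
inductive Spanned (E : Set (Sym2 V)) : Finset V → Prop
  | pair {u v : V} (huv : u ≠ v) (h : s(u,v) ∈ E) : Spanned E {u, v}
  | merge2 {A B : Finset V} {a b : V} (hA : Spanned E A) (hB : Spanned E B)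
      (hab : a ≠ b) (haA : a ∈ A) (hbA : b ∈ A) (haB : a ∈ B) (hbB : b ∈ B) :
      Spanned E (A ∪ B)
  | merge3 {A B C : Finset V} {a b c : V} (hA : Spanned E A) (hB : Spanned E B)
      (hC : Spanned E C) (hab : a ≠ b) (hac : a ≠ c) (hbc : b ≠ c)
      (haA : a ∈ A) (hbA : b ∈ A) (haB : a ∈ B) (hcB : c ∈ B) (hbC : b ∈ C) (hcC : c ∈ C) :
      Spanned E (A ∪ B ∪ C)

lemma Spanned.spans {E : Set (Sym2 V)} {A : Finset V} (h : Spanned E A) : Spans E A := by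
  induction h with
  | @pair u v huv he =>
    intro x hx y hy hxy
    have hm : s(u,v) ∈ res E ↑({u,v} : Finset V) :=
      ⟨he, by intro w hw; rcases Sym2.mem_iff.mp hw with rfl | rfl <;> simp⟩
    have base : s(u,v) ∈ bootClosure (SimpleGraph.completeGraph (Fin 4)) (res E ↑({u,v} : Finset V)) := subset_bootClosure hm
    simp only [Finset.coe_insert, Finset.mem_insert, Finset.mem_singleton] at hx hy
    rcases hx with rfl | rfl <;> rcases hy with rfl | rfl
    · exact absurd rfl hxy
    · exact base
    · rw [Sym2.eq_swap]; exact base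
    · exact absurd rfl hxy
  | @merge2 A B a b hA hB hab haA hbA haB hbB ihA ihB =>
    exact Fcl_union
      (Fcl.mono (res_mono_right (Finset.coe_subset.mpr Finset.subset_union_left)) ihA)
      (Fcl.mono (res_mono_right (Finset.coe_subset.mpr Finset.subset_union_right)) ihB)
      hab haA hbA haB hbB
  | @merge3 A B C a b c hA hB hC hab hac hbc haA hbA haB hcB hbC hcC ihA ihB ihC =>
    refine Fcl_triangle ?_ ?_ ?_ hab hac hbc haA hbA haB hcB hbC hcC
    · exact Fcl.mono (res_mono_right (Finset.coe_subset.mpr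
        (Finset.subset_union_left.trans Finset.subset_union_left))) ihA
    · exact Fcl.mono (res_mono_right (Finset.coe_subset.mpr
        (Finset.subset_union_right.trans Finset.subset_union_left))) ihB
    · exact Fcl.mono (res_mono_right (Finset.coe_subset.mpr Finset.subset_union_right)) ihC

lemma Spanned.exists_intermediate {E : Set (Sym2 V)} {A : Finset V} (h : Spanned E A) :
    ∀ L : ℕ, 1 ≤ L → L ≤ A.card →
      ∃ B : Finset V, Spanned E B ∧ L ≤ B.card ∧ B.card ≤ 3 * L := by
  induction h with
  | @pair u v huv he =>
    intro L hL hLA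
    refine ⟨{u,v}, Spanned.pair huv he, hLA, ?_⟩
    rw [Finset.card_pair huv] at hLA ⊢
    omega
  | @merge2 A B a b hA hB hab haA hbA haB hbB ihA ihB =>
    intro L hL hLA
    by_cases hc : (A ∪ B).card ≤ 3 * L
    · exact ⟨A ∪ B, Spanned.merge2 hA hB hab haA hbA haB hbB, hLA, hc⟩
    · have hcard : 3 * L < A.card + B.card :=
        lt_of_lt_of_le (not_le.mp hc) (Finset.card_union_le A B)
      rcases le_total A.card B.card with hle | hle
      · exact ihB L hL (by omega)
      · exact ihA L hL (by omega)
  | @merge3 A B C a b c hA hB hC hab hac hbc haA hbA haB hcB hbC hcC ihA ihB ihC =>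
    intro L hL hLA
    by_cases hc : (A ∪ B ∪ C).card ≤ 3 * L
    · exact ⟨A ∪ B ∪ C, Spanned.merge3 hA hB hC hab hac hbc haA hbA haB hcB hbC hcC, hLA, hc⟩
    · have hcard : 3 * L < A.card + B.card + C.card := by
        have h1 := Finset.card_union_le (A ∪ B) C
        have h2 := Finset.card_union_le A B
        omega
      rcases le_total A.card B.card with h1 | h1
      · rcases le_total B.card C.card with h2 | h2
        · exact ihC L hL (by omega)
        · exact ihB L hL (by omega)
      · rcases le_total A.card C.card with h2 | h2
        · exact ihC L hL (by omega)
        · exact ihA L hL (by omega)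

end Span

section Build
variable {V : Type*} [DecidableEq V]

lemma spanned_of_mem_iter {E : Set (Sym2 V)} :
    ∀ t : ℕ, ∀ e ∈ (bootStep (SimpleGraph.completeGraph (Fin 4)))^[t] E, ¬e.IsDiag →
      ∃ A : Finset V, Spanned E A ∧ ∀ w ∈ e, w ∈ A := by
  intro t
  induction t with
  | zero =>
    intro e he hd
    induction e using Sym2.ind with
    | _ u v =>
      have huv : u ≠ v := by simpa [Sym2.mk_isDiag_iff] using hd
      exact ⟨{u,v}, Spanned.pair huv he,
        by intro w hw; rcases Sym2.mem_iff.mp hw with rfl | rfl <;> simp⟩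
  | succ t ih =>
    intro e he hd
    rw [Function.iterate_succ_apply'] at he
    rcases he with he | ⟨f, ⟨p, hp, rfl⟩, hsub⟩
    · exact ih e he hd
    · induction p using Sym2.ind with
      | _ i j =>
      have hij : i ≠ j := by simpa [SimpleGraph.completeGraph, SimpleGraph.mem_edgeSet] using hp
      have key : ∀ k l : Fin 4, k ≠ l → s(k,l) ≠ s(i,j) →
          ∃ A : Finset V, Spanned E A ∧ f k ∈ A ∧ f l ∈ A := by
        intro k l hkl hne
        have hmem : s(f k, f l) ∈ copyEdges (SimpleGraph.completeGraph (Fin 4)) f :=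
          ⟨s(k,l), by simpa [SimpleGraph.completeGraph, SimpleGraph.mem_edgeSet] using hkl,
            Sym2.map_pair_eq f k l⟩
        have hiter : s(f k, f l) ∈ (bootStep (SimpleGraph.completeGraph (Fin 4)))^[t] E := by
          rcases hsub hmem with h | h
          · exfalso
            apply hne
            apply Sym2.map.injective f.injective
            rw [Sym2.map_pair_eq]
            exact h
          · exact h
        obtain ⟨A, hA, hmemA⟩ := ih _ hiter
          (by simp only [Sym2.mk_isDiag_iff]; exact f.injective.ne hkl)
        exact ⟨A, hA, hmemA _ (Sym2.mem_iff.mpr (Or.inl rfl)),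
          hmemA _ (Sym2.mem_iff.mpr (Or.inr rfl))⟩
      obtain ⟨k, l, hkl, hki, hkj, hli, hlj⟩ :
          ∃ k l : Fin 4, k ≠ l ∧ k ≠ i ∧ k ≠ j ∧ l ≠ i ∧ l ≠ j := by
        have : ∀ i j : Fin 4, i ≠ j →
            ∃ k l : Fin 4, k ≠ l ∧ k ≠ i ∧ k ≠ j ∧ l ≠ i ∧ l ≠ j := by decide
        exact this i j hij
      have hne1 : s(i,k) ≠ s(i,j) := by
        intro heq; rcases Sym2.eq_iff.mp heq with (⟨-, h2⟩ | ⟨h1, -⟩); exacts [hkj h2, hij h1]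
      have hne2 : s(i,l) ≠ s(i,j) := by
        intro heq; rcases Sym2.eq_iff.mp heq with (⟨-, h2⟩ | ⟨h1, -⟩); exacts [hlj h2, hij h1]
      have hne3 : s(k,l) ≠ s(i,j) := by
        intro heq; rcases Sym2.eq_iff.mp heq with (⟨h1, -⟩ | ⟨h1, -⟩); exacts [hki h1, hkj h1]
      have hne4 : s(j,k) ≠ s(i,j) := by
        intro heq; rcases Sym2.eq_iff.mp heq with (⟨-, h2⟩ | ⟨-, h2⟩); exacts [hkj h2, hki h2]
      have hne5 : s(j,l) ≠ s(i,j) := by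
        intro heq; rcases Sym2.eq_iff.mp heq with (⟨-, h2⟩ | ⟨-, h2⟩); exacts [hlj h2, hli h2]
      obtain ⟨T1, hT1, hT1i, hT1k⟩ := key i k (Ne.symm hki) hne1
      obtain ⟨T2, hT2, hT2i, hT2l⟩ := key i l (Ne.symm hli) hne2
      obtain ⟨T3, hT3, hT3k, hT3l⟩ := key k l hkl hne3
      obtain ⟨T4, hT4, hT4j, hT4k⟩ := key j k (Ne.symm hkj) hne4
      obtain ⟨T5, hT5, hT5j, hT5l⟩ := key j l (Ne.symm hlj) hne5
      have hfik : f i ≠ f k := f.injective.ne (Ne.symm hki)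
      have hfil : f i ≠ f l := f.injective.ne (Ne.symm hli)
      have hfjk : f j ≠ f k := f.injective.ne (Ne.symm hkj)
      have hfjl : f j ≠ f l := f.injective.ne (Ne.symm hlj)
      have hfkl : f k ≠ f l := f.injective.ne hkl
      have hB1 : Spanned E (T1 ∪ T2 ∪ T3) :=
        Spanned.merge3 hT1 hT2 hT3 hfik hfil hfkl hT1i hT1k hT2i hT2l hT3k hT3l
      have hB2 : Spanned E (T4 ∪ T5 ∪ T3) :=
        Spanned.merge3 hT4 hT5 hT3 hfjk hfjl hfkl hT4j hT4k hT5j hT5l hT3k hT3l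
      have hB : Spanned E (T1 ∪ T2 ∪ T3 ∪ (T4 ∪ T5 ∪ T3)) :=
        Spanned.merge2 hB1 hB2 hfkl
          (Finset.mem_union_left _ (Finset.mem_union_left _ hT1k))
          (Finset.mem_union_right _ hT3l)
          (Finset.mem_union_left _ (Finset.mem_union_left _ hT4k))
          (Finset.mem_union_right _ hT3l)
      refine ⟨_, hB, ?_⟩
      rw [Sym2.map_pair_eq]
      intro w hw
      rcases Sym2.mem_iff.mp hw with rfl | rfl
      · exact Finset.mem_union_left _
          (Finset.mem_union_left _ (Finset.mem_union_left _ hT1i))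
      · exact Finset.mem_union_right _
          (Finset.mem_union_left _ (Finset.mem_union_left _ hT4j))

lemma exists_spanned_big [Fintype V] {E : Set (Sym2 V)}
    (hperc : bootClosure (SimpleGraph.completeGraph (Fin 4)) E = (⊤ : SimpleGraph V).edgeSet) :
    ∀ k, 2 ≤ k → k ≤ Fintype.card V → ∃ A : Finset V, Spanned E A ∧ k ≤ A.card := by
  have edge : ∀ u v : V, u ≠ v → ∃ A, Spanned E A ∧ u ∈ A ∧ v ∈ A := by
    intro u v huv
    have hmem : s(u,v) ∈ bootClosure (SimpleGraph.completeGraph (Fin 4)) E := by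
      rw [hperc]; simpa [SimpleGraph.mem_edgeSet] using huv
    obtain ⟨t, ht⟩ := Set.mem_iUnion.mp hmem
    obtain ⟨A, hA, hm⟩ := spanned_of_mem_iter t _ ht
      (by simp only [Sym2.mk_isDiag_iff]; exact huv)
    exact ⟨A, hA, hm u (Sym2.mem_iff.mpr (Or.inl rfl)), hm v (Sym2.mem_iff.mpr (Or.inr rfl))⟩
  intro k
  induction k with
  | zero => omega
  | succ k ihk =>
    intro hk2 hkn
    by_cases hk1 : k < 2
    · have hk : k = 1 := by omega
      subst hk
      obtain ⟨u, v, huv⟩ := Fintype.exists_pair_of_one_lt_card (α := V) (by omega)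
      obtain ⟨A, hA, huA, hvA⟩ := edge u v huv
      exact ⟨A, hA, Finset.one_lt_card.mpr ⟨u, huA, v, hvA, huv⟩⟩
    · obtain ⟨A, hA, hcard⟩ := ihk (by omega) (by omega)
      by_cases hbig : k + 1 ≤ A.card
      · exact ⟨A, hA, hbig⟩
      · have hAcard : A.card = k := by omega
        have hAne : A ≠ Finset.univ := by
          intro h; rw [h, Finset.card_univ] at hAcard; omega
        obtain ⟨v, hv⟩ : ∃ v, v ∉ A := by
          by_contra hall
          push_neg at hall
          exact hAne (Finset.eq_univ_iff_forall.mpr hall)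
        obtain ⟨u, hu, u', hu', huu'⟩ := Finset.one_lt_card.mp (by omega : 1 < A.card)
        have hvu : u ≠ v := fun h => hv (h ▸ hu)
        have hvu' : u' ≠ v := fun h => hv (h ▸ hu')
        obtain ⟨T1, hT1, huT1, hvT1⟩ := edge u v hvu
        obtain ⟨T2, hT2, hu'T2, hvT2⟩ := edge u' v hvu'
        refine ⟨A ∪ T1 ∪ T2, Spanned.merge3 hA hT1 hT2 huu' hvu hvu'
          hu hu' huT1 hvT1 hu'T2 hvT2, ?_⟩
        have hsub : insert v A ⊆ A ∪ T1 ∪ T2 := by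
          intro x hx
          rcases Finset.mem_insert.mp hx with rfl | hx
          · exact Finset.mem_union_left _ (Finset.mem_union_right _ hvT1)
          · exact Finset.mem_union_left _ (Finset.mem_union_left _ hx)
        calc k + 1 = (insert v A).card := by rw [Finset.card_insert_of_notMem hv, hAcard]
          _ ≤ _ := Finset.card_le_card hsub

end Build

section Transfer
variable {V : Type*} [DecidableEq V]

lemma bootStep_inside {A : Set V} {E : Set (Sym2 V)}
    (hE : ∀ e ∈ E, ∀ v ∈ e, v ∈ A) :
    ∀ e ∈ bootStep (SimpleGraph.completeGraph (Fin 4)) E, ∀ v ∈ e, v ∈ A := by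
  rintro e (he | ⟨f, ⟨p, hp, rfl⟩, hsub⟩) v hv
  · exact hE e he v hv
  · induction p using Sym2.ind with
    | _ i j =>
      have hij : i ≠ j := by simpa [SimpleGraph.completeGraph, SimpleGraph.mem_edgeSet] using hp
      have hA : ∀ m : Fin 4, f m ∈ A := by
        intro m
        obtain ⟨k, hkm, hne⟩ : ∃ k : Fin 4, m ≠ k ∧ s(m,k) ≠ s(i,j) := by
          have : ∀ i j m : Fin 4, i ≠ j → ∃ k, m ≠ k ∧ s(m,k) ≠ s(i,j) := by decide
          exact this i j m hij
        have hmem : s(f m, f k) ∈ copyEdges (SimpleGraph.completeGraph (Fin 4)) f :=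
          ⟨s(m,k), by simpa [SimpleGraph.completeGraph, SimpleGraph.mem_edgeSet] using hkm,
            Sym2.map_pair_eq f m k⟩
        have hE' : s(f m, f k) ∈ E := by
          rcases hsub hmem with h | h
          · exfalso
            apply hne
            apply Sym2.map.injective f.injective
            rw [Sym2.map_pair_eq]
            exact h
          · exact h
        exact hE _ hE' (f m) (Sym2.mem_iff.mpr (Or.inl rfl))
      rw [Sym2.map_pair_eq] at hv
      rcases Sym2.mem_iff.mp hv with rfl | rfl
      · exact hA i
      · exact hA j

lemma bootStep_nondiag {E : Set (Sym2 V)} (hE : ∀ e ∈ E, ¬e.IsDiag) :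
    ∀ e ∈ bootStep (SimpleGraph.completeGraph (Fin 4)) E, ¬e.IsDiag := by
  rintro e (he | ⟨f, ⟨p, hp, rfl⟩, -⟩)
  · exact hE e he
  · rw [Sym2.isDiag_map f.injective]
    exact (SimpleGraph.completeGraph (Fin 4)).not_isDiag_of_mem_edgeSet hp

lemma bootClosure_inside {A : Set V} {E : Set (Sym2 V)}
    (hE : ∀ e ∈ E, ∀ v ∈ e, v ∈ A) :
    ∀ e ∈ bootClosure (SimpleGraph.completeGraph (Fin 4)) E, ∀ v ∈ e, v ∈ A := by
  intro e he
  obtain ⟨t, ht⟩ := Set.mem_iUnion.mp he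
  clear he
  induction t generalizing e with
  | zero => exact hE e ht
  | succ t ih =>
    rw [Function.iterate_succ_apply'] at ht
    exact bootStep_inside (fun e' he' => ih e' he') e ht

lemma bootClosure_nondiag {E : Set (Sym2 V)} (hE : ∀ e ∈ E, ¬e.IsDiag) :
    ∀ e ∈ bootClosure (SimpleGraph.completeGraph (Fin 4)) E, ¬e.IsDiag := by
  intro e he
  obtain ⟨t, ht⟩ := Set.mem_iUnion.mp he
  clear he
  induction t generalizing e with
  | zero => exact hE e ht
  | succ t ih =>
    rw [Function.iterate_succ_apply'] at ht
    exact bootStep_nondiag (fun e' he' => ih e' he') e ht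

lemma copyEdges_trans {W X : Type*} (H : SimpleGraph W) (f' : W ↪ X) (g : X ↪ V) :
    copyEdges H (f'.trans g) = Sym2.map g '' copyEdges H f' := by
  unfold copyEdges
  rw [← Set.image_comp]
  apply Set.image_congr'
  intro e
  rw [Function.comp_apply, Sym2.map_map]
  rfl

lemma image_bootStep {A : Set V} (E' : Set (Sym2 A)) :
    Sym2.map (Subtype.val : A → V) '' bootStep (SimpleGraph.completeGraph (Fin 4)) E' =
      bootStep (SimpleGraph.completeGraph (Fin 4)) (Sym2.map (Subtype.val : A → V) '' E') := by
  have hinc : Function.Injective (Subtype.val : A → V) := Subtype.val_injective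
  have hιinj : Function.Injective (Sym2.map (Subtype.val : A → V)) :=
    Sym2.map.injective hinc
  set ι := Sym2.map (Subtype.val : A → V) with hι
  apply Set.Subset.antisymm
  · rintro x ⟨e', he', rfl⟩
    rcases he' with he' | ⟨f', hc, hs⟩
    · exact Or.inl ⟨e', he', rfl⟩
    · refine Or.inr ⟨f'.trans ⟨Subtype.val, hinc⟩, ?_, ?_⟩
      · rw [copyEdges_trans]
        exact ⟨e', hc, rfl⟩
      · rw [copyEdges_trans]
        rintro y ⟨z, hz, rfl⟩
        rcases hs hz with rfl | hzE
        · exact Set.mem_insert _ _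
        · exact Set.mem_insert_of_mem _ ⟨z, hzE, rfl⟩
  · rintro x (hx | ⟨f, ⟨p, hp, rfl⟩, hsub⟩)
    · obtain ⟨e', he', rfl⟩ := hx
      exact ⟨e', Or.inl he', rfl⟩
    · induction p using Sym2.ind with
      | _ i j =>
        have hij : i ≠ j := by simpa [SimpleGraph.completeGraph, SimpleGraph.mem_edgeSet] using hp
        have hA : ∀ m : Fin 4, f m ∈ A := by
          intro m
          obtain ⟨k, hkm, hne⟩ : ∃ k : Fin 4, m ≠ k ∧ s(m,k) ≠ s(i,j) := by
            have : ∀ i j m : Fin 4, i ≠ j → ∃ k, m ≠ k ∧ s(m,k) ≠ s(i,j) := by decide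
            exact this i j m hij
          have hmem : s(f m, f k) ∈ copyEdges (SimpleGraph.completeGraph (Fin 4)) f :=
            ⟨s(m,k), by simpa [SimpleGraph.completeGraph, SimpleGraph.mem_edgeSet] using hkm,
              Sym2.map_pair_eq f m k⟩
          have hE' : s(f m, f k) ∈ ι '' E' := by
            rcases hsub hmem with h | h
            · exfalso
              apply hne
              apply Sym2.map.injective f.injective
              rw [Sym2.map_pair_eq]
              exact h
            · exact h
          obtain ⟨e2, -, he2⟩ := hE'
          have : f m ∈ ι e2 := he2 ▸ Sym2.mem_iff.mpr (Or.inl rfl)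
          obtain ⟨a, -, ha⟩ := Sym2.mem_map.mp this
          exact ha ▸ a.2
        set f' : Fin 4 ↪ A :=
          ⟨fun m => ⟨f m, hA m⟩, fun m1 m2 hm => f.injective (congrArg Subtype.val hm)⟩
          with hf'
        have hfeq : f'.trans ⟨Subtype.val, hinc⟩ = f := by
          ext m
          rfl
        have hcopy : copyEdges (SimpleGraph.completeGraph (Fin 4)) f = ι '' copyEdges (SimpleGraph.completeGraph (Fin 4)) f' := by
          rw [← hfeq, copyEdges_trans]
          rfl
        refine ⟨Sym2.map f' s(i,j), Or.inr ⟨f', ⟨s(i,j), hp, rfl⟩, ?_⟩, ?_⟩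
        · intro y hy
          have hyι : ι y ∈ copyEdges (SimpleGraph.completeGraph (Fin 4)) f := by
            rw [hcopy]
            exact ⟨y, hy, rfl⟩
          rcases hsub hyι with h | h
          · left
            apply hιinj
            rw [h]
            rw [hι, Sym2.map_map]
            rfl
          · right
            obtain ⟨z, hz, hze⟩ := h
            rwa [← hιinj hze]
        · rw [hι, Sym2.map_map]
          rfl

lemma image_bootClosure {A : Set V} (E' : Set (Sym2 A)) :
    Sym2.map (Subtype.val : A → V) '' bootClosure (SimpleGraph.completeGraph (Fin 4)) E' =
      bootClosure (SimpleGraph.completeGraph (Fin 4)) (Sym2.map (Subtype.val : A → V) '' E') := by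
  unfold bootClosure
  rw [Set.image_iUnion]
  apply Set.iUnion_congr
  intro t
  induction t with
  | zero => rfl
  | succ t ih =>
    rw [Function.iterate_succ_apply', Function.iterate_succ_apply', image_bootStep, ih]

end Transfer

section Final
variable {V : Type*} [DecidableEq V]

lemma spans_intSpanned {E : Set (Sym2 V)} (hnd : ∀ e ∈ E, ¬e.IsDiag)
    {A : Finset V} (hS : Spans E A) : IntSpanned E (↑A : Set V) := by
  unfold IntSpanned
  apply Function.Injective.image_injective
    (Sym2.map.injective (Subtype.val_injective : Function.Injective (Subtype.val : (↑A : Set V) → V)))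
  rw [image_bootClosure]
  have h1 : Sym2.map (Subtype.val : (↑A : Set V) → V) ''
      {e : Sym2 (↑A : Set V) | Sym2.map (Subtype.val : (↑A : Set V) → V) e ∈ E} =
      res E (↑A : Set V) := by
    apply Set.Subset.antisymm
    · rintro x ⟨e0, he0, rfl⟩
      refine ⟨he0, ?_⟩
      intro v hv
      obtain ⟨a, -, ha⟩ := Sym2.mem_map.mp hv
      exact ha ▸ a.2
    · intro e he
      induction e using Sym2.ind with
      | _ u v =>
        have hu : u ∈ (↑A : Set V) := he.2 u (Sym2.mem_iff.mpr (Or.inl rfl))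
        have hv : v ∈ (↑A : Set V) := he.2 v (Sym2.mem_iff.mpr (Or.inr rfl))
        refine ⟨s(⟨u, hu⟩, ⟨v, hv⟩), ?_, by rw [Sym2.map_pair_eq]⟩
        show Sym2.map _ _ ∈ E
        rw [Sym2.map_pair_eq]
        exact he.1
  have h2 : Sym2.map (Subtype.val : (↑A : Set V) → V) ''
      (⊤ : SimpleGraph (↑A : Set V)).edgeSet = res (⊤ : SimpleGraph V).edgeSet (↑A : Set V) := by
    apply Set.Subset.antisymm
    · rintro x ⟨e0, he0, rfl⟩
      induction e0 using Sym2.ind with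
      | _ a b =>
        have hab : a ≠ b := by simpa [SimpleGraph.mem_edgeSet] using he0
        rw [Sym2.map_pair_eq]
        refine ⟨?_, ?_⟩
        · simpa [SimpleGraph.mem_edgeSet] using fun hh => hab (Subtype.ext hh)
        · intro v hv
          rcases Sym2.mem_iff.mp hv with rfl | rfl
          · exact a.2
          · exact b.2
    · intro e he
      induction e using Sym2.ind with
      | _ u v =>
        have huv : u ≠ v := by simpa [SimpleGraph.mem_edgeSet] using he.1
        have hu : u ∈ (↑A : Set V) := he.2 u (Sym2.mem_iff.mpr (Or.inl rfl))
        have hv : v ∈ (↑A : Set V) := he.2 v (Sym2.mem_iff.mpr (Or.inr rfl))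
        refine ⟨s(⟨u, hu⟩, ⟨v, hv⟩), ?_, by rw [Sym2.map_pair_eq]⟩
        simpa [SimpleGraph.mem_edgeSet, Subtype.mk_eq_mk] using huv
  rw [h1, h2]
  apply Set.Subset.antisymm
  · intro e he
    have hin := bootClosure_inside (A := (↑A : Set V)) (fun e' he' => he'.2) e he
    have hnd' := bootClosure_nondiag (fun e' he' => hnd e' he'.1) e he
    refine ⟨?_, hin⟩
    rw [SimpleGraph.edgeSet_top]
    exact hnd'
  · rintro e ⟨hE, hin⟩
    induction e using Sym2.ind with
    | _ u v =>
      have huv : u ≠ v := by simpa [SimpleGraph.mem_edgeSet] using hE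
      exact hS u (hin u (Sym2.mem_iff.mpr (Or.inl rfl)))
        v (hin v (Sym2.mem_iff.mpr (Or.inr rfl))) huv

end Final

/-- **Lemma 22 (Aizenman–Lebowitz type).** If the `K_4`-bootstrap closure of `G` is `K_n`
and `1 ≤ L ≤ n`, then some set `A` of between `L` and `3L` vertices is internally
spanned by `G`. -/
theorem internally_spanned_intermediate (n L : ℕ) (hL : 1 ≤ L) (hLn : L ≤ n)
    (G : SimpleGraph (Fin n))
    (h : bootClosure (SimpleGraph.completeGraph (Fin 4)) G.edgeSet =
      (⊤ : SimpleGraph (Fin n)).edgeSet) :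
    ∃ A : Finset (Fin n), L ≤ A.card ∧ A.card ≤ 3 * L ∧
      IntSpanned G.edgeSet (↑A : Set (Fin n)) := by
  have hnd : ∀ e ∈ G.edgeSet, ¬e.IsDiag := fun e he => G.not_isDiag_of_mem_edgeSet he
  by_cases hn1 : n < 2
  · have hL1 : L = 1 := by omega
    have hn0 : 0 < n := by omega
    refine ⟨{⟨0, hn0⟩}, ?_, ?_, ?_⟩
    · simp [hL1]
    · simp [hL1]
    · apply spans_intSpanned hnd
      intro x hx y hy hxy
      simp only [Finset.mem_singleton] at hx hy
      exact absurd (hx.trans hy.symm) hxy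
  · have hn2 : 2 ≤ n := by omega
    obtain ⟨A, hA, hcard⟩ := exists_spanned_big h (max L 2) (le_max_right _ _)
      (by rw [Fintype.card_fin]; omega)
    obtain ⟨B, hB, h1, h2⟩ := hA.exists_intermediate L hL
      (le_trans (le_max_left L 2) hcard)
    exact ⟨B, h1, h2, spans_intSpanned hnd hB.spans⟩
end

section
/- Let R be a finite vertex set, let S ⊆ R with |S| ≥ 2, and let G be a set of edges of the complete graph on R. If the K_4-bootstrap closure (in the complete graph on R) of G ∪ E(K_S) equals E(K_R), where K_S is the complete graph on S, then the number of edges of G that do not have both endpoints in S is at least 2·(|R| − |S|). -/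
open Finset

/-! ### Auxiliary rigidity-matrix machinery -/

namespace K4Boot

open Submodule

variable {V : Type*} [DecidableEq V]

/-- The rigidity-matrix row of the edge `uv` with vertex positions `p`. -/
noncomputable def rowf (p : V → ℝ × ℝ) (u v : V) : V → ℝ × ℝ :=
  Pi.single u (p u - p v) + Pi.single v (p v - p u)

lemma rowf_comm (p : V → ℝ × ℝ) (u v : V) : rowf p u v = rowf p v u := add_comm _ _

@[simp] lemma rowf_self (p : V → ℝ × ℝ) (u : V) : rowf p u u = 0 := by
  simp [rowf]

/-- The rigidity-matrix row of an unordered edge. -/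
noncomputable def rowS (p : V → ℝ × ℝ) : Sym2 V → (V → ℝ × ℝ) :=
  Sym2.lift ⟨fun u v => rowf p u v, fun u v => rowf_comm p u v⟩

@[simp] lemma rowS_mk (p : V → ℝ × ℝ) (u v : V) : rowS p s(u, v) = rowf p u v := rfl

/-- Four distinct points on the parabola carry a self-stress with nonzero coefficients. -/
lemma stress_exists (y : Fin 4 → ℝ) (hy : Function.Injective y) :
    ∃ c : Fin 4 → ℝ, (∀ i, c i ≠ 0) ∧ (∑ i, c i = 0) ∧ (∑ i, c i * y i = 0) ∧
      (∑ i, c i * y i ^ 2 = 0) := by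
  have hd : ∀ i j : Fin 4, i ≠ j → y i - y j ≠ 0 := fun i j hij =>
    sub_ne_zero.2 (fun h => hij (hy h))
  have d01 := hd 0 1 (by decide); have d02 := hd 0 2 (by decide)
  have d03 := hd 0 3 (by decide); have d12 := hd 1 2 (by decide)
  have d13 := hd 1 3 (by decide); have d23 := hd 2 3 (by decide)
  have d10 := hd 1 0 (by decide); have d20 := hd 2 0 (by decide)
  have d30 := hd 3 0 (by decide); have d21 := hd 2 1 (by decide)
  have d31 := hd 3 1 (by decide); have d32 := hd 3 2 (by decide)
  refine ⟨![((y 0 - y 1) * ((y 0 - y 2) * (y 0 - y 3)))⁻¹,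
            ((y 1 - y 0) * ((y 1 - y 2) * (y 1 - y 3)))⁻¹,
            ((y 2 - y 0) * ((y 2 - y 1) * (y 2 - y 3)))⁻¹,
            ((y 3 - y 0) * ((y 3 - y 1) * (y 3 - y 2)))⁻¹], ?_, ?_, ?_, ?_⟩
  · intro i
    fin_cases i <;>
      simp only [Matrix.cons_val_zero, Matrix.cons_val_one, Matrix.head_cons,
        Matrix.cons_val_two, Matrix.tail_cons, Matrix.cons_val_three] <;>
      exact inv_ne_zero (mul_ne_zero (by assumption) (mul_ne_zero (by assumption) (by assumption)))
  · rw [Fin.sum_univ_four]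
    simp only [Matrix.cons_val_zero, Matrix.cons_val_one, Matrix.head_cons,
      Matrix.cons_val_two, Matrix.tail_cons, Matrix.cons_val_three]
    field_simp
    ring
  · rw [Fin.sum_univ_four]
    simp only [Matrix.cons_val_zero, Matrix.cons_val_one, Matrix.head_cons,
      Matrix.cons_val_two, Matrix.tail_cons, Matrix.cons_val_three]
    field_simp
    ring
  · rw [Fin.sum_univ_four]
    simp only [Matrix.cons_val_zero, Matrix.cons_val_one, Matrix.head_cons,
      Matrix.cons_val_two, Matrix.tail_cons, Matrix.cons_val_three]
    field_simp
    ring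

/-- If all the other five edges of an embedded `K₄` are present, the row of the sixth
edge is in the span. -/
lemma row_mem_span (x : V → ℝ) (hx : Function.Injective x) (f : Fin 4 ↪ V)
    (i0 j0 : Fin 4) (hij : i0 ≠ j0) (E : Set (Sym2 V))
    (hE : ∀ i j : Fin 4, i ≠ j → (i, j) ≠ (i0, j0) → (i, j) ≠ (j0, i0) →
      s(f i, f j) ∈ E) :
    rowS (fun v => (x v, x v ^ 2)) s(f i0, f j0) ∈
      span ℝ (rowS (fun v => (x v, x v ^ 2)) '' E) := by
  set p : V → ℝ × ℝ := fun v => (x v, x v ^ 2) with hp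
  obtain ⟨c, hc, hc0, hc1, hc2⟩ := stress_exists (x ∘ f) (hx.comp f.injective)
  have hq : ∑ j : Fin 4, c j • p (f j) = 0 := by
    have h1 : (∑ j : Fin 4, c j • p (f j)).1 = 0 := by
      rw [Prod.fst_sum]; simpa using hc1
    have h2 : (∑ j : Fin 4, c j • p (f j)).2 = 0 := by
      rw [Prod.snd_sum]; simpa using hc2
    exact Prod.ext h1 h2
  -- key half-sum identity
  have hkey : ∑ i : Fin 4, ∑ j : Fin 4,
      (c i * c j) • (Pi.single (f i) (p (f i) - p (f j)) : V → ℝ × ℝ) = (0 : V → ℝ × ℝ) := by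
    refine Finset.sum_eq_zero fun i _ => ?_
    have hout : ∑ j : Fin 4, (c i * c j) • (Pi.single (f i) (p (f i) - p (f j)) : V → ℝ × ℝ)
        = (Pi.single (f i) (∑ j : Fin 4, (c i * c j) • (p (f i) - p (f j))) : V → ℝ × ℝ) := by
      funext w
      simp only [Finset.sum_apply, Pi.smul_apply, Pi.single_apply, smul_ite, smul_zero]
      by_cases hw : w = f i <;> simp [hw]
    rw [hout]
    have hin : ∑ j : Fin 4, (c i * c j) • (p (f i) - p (f j)) = 0 := by
      have hterm : ∀ j : Fin 4, (c i * c j) • (p (f i) - p (f j))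
          = c i • (c j • p (f i) - c j • p (f j)) := fun j => by
        rw [smul_sub, smul_sub, smul_smul, smul_smul]
      simp_rw [hterm]
      rw [← Finset.smul_sum, Finset.sum_sub_distrib, ← Finset.sum_smul, hc0, hq,
        zero_smul, sub_zero, smul_zero]
    rw [hin, Pi.single_zero]
  -- full double sum
  have hsum : ∑ ij : Fin 4 × Fin 4, (c ij.1 * c ij.2) • rowf p (f ij.1) (f ij.2)
      = (0 : V → ℝ × ℝ) := by
    rw [Fintype.sum_prod_type]
    have : ∀ i j : Fin 4, (c i * c j) • rowf p (f i) (f j)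
        = (c i * c j) • (Pi.single (f i) (p (f i) - p (f j)) : V → ℝ × ℝ)
          + (c j * c i) • (Pi.single (f j) (p (f j) - p (f i)) : V → ℝ × ℝ) := by
      intro i j; rw [rowf, smul_add, mul_comm (c j) (c i)]
    simp_rw [this, Finset.sum_add_distrib]
    rw [hkey, zero_add, Finset.sum_comm, hkey]
  classical
  set F : Fin 4 × Fin 4 → (V → ℝ × ℝ) :=
    fun ij => (c ij.1 * c ij.2) • rowf p (f ij.1) (f ij.2) with hF
  have hmem1 : ((i0, j0) : Fin 4 × Fin 4) ∈ (Finset.univ : Finset (Fin 4 × Fin 4)) :=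
    Finset.mem_univ _
  have hne : ((j0, i0) : Fin 4 × Fin 4) ≠ (i0, j0) := by
    simp [Prod.ext_iff]; intro h; exact absurd h (Ne.symm hij)
  have hmem2 : ((j0, i0) : Fin 4 × Fin 4) ∈ (Finset.univ.erase (i0, j0)) :=
    Finset.mem_erase.2 ⟨hne, Finset.mem_univ _⟩
  have hsplit : F (i0, j0) + (F (j0, i0) + ∑ ij ∈ (Finset.univ.erase (i0, j0)).erase (j0, i0), F ij)
      = ∑ ij : Fin 4 × Fin 4, F ij := by
    rw [Finset.add_sum_erase _ F hmem2, Finset.add_sum_erase _ F hmem1]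
  have hrest : ∑ ij ∈ (Finset.univ.erase (i0, j0)).erase (j0, i0), F ij ∈
      span ℝ (rowS p '' E) := by
    refine sum_mem fun ij hijmem => ?_
    rcases eq_or_ne ij.1 ij.2 with heq | hne2
    · simp [hF, heq]
    · have h1 : ij ≠ (j0, i0) := (Finset.mem_erase.1 hijmem).1
      have h2 : ij ≠ (i0, j0) := (Finset.mem_erase.1 (Finset.mem_erase.1 hijmem).2).1
      have : s(f ij.1, f ij.2) ∈ E := hE ij.1 ij.2 hne2 (by simpa using h2) (by simpa using h1)
      have : rowf p (f ij.1) (f ij.2) ∈ span ℝ (rowS p '' E) :=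
        subset_span ⟨s(f ij.1, f ij.2), this, rfl⟩
      exact smul_mem _ _ this
  have hcne : (2 * (c i0 * c j0)) ≠ 0 :=
    mul_ne_zero two_ne_zero (mul_ne_zero (hc i0) (hc j0))
  have hmain : (2 * (c i0 * c j0)) • rowS p s(f i0, f j0) ∈ span ℝ (rowS p '' E) := by
    have heq : F (i0, j0) + F (j0, i0) = (2 * (c i0 * c j0)) • rowS p s(f i0, f j0) := by
      simp only [hF, rowS_mk]
      rw [rowf_comm p (f j0) (f i0), mul_comm (c j0) (c i0), ← add_smul]
      ring_nf
    have h0 : F (i0, j0) + F (j0, i0)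
        + ∑ ij ∈ (Finset.univ.erase (i0, j0)).erase (j0, i0), F ij = 0 := by
      rw [add_assoc, hsplit]; exact hsum
    have h1 : (2 * (c i0 * c j0)) • rowS p s(f i0, f j0)
        = - ∑ ij ∈ (Finset.univ.erase (i0, j0)).erase (j0, i0), F ij := by
      rw [← heq]; exact eq_neg_of_add_eq_zero_left h0
    rw [h1]; exact neg_mem hrest
  have := smul_mem (span ℝ (rowS p '' E)) (2 * (c i0 * c j0))⁻¹ hmain
  rwa [inv_smul_smul₀ hcne] at this

lemma span_bootStep (x : V → ℝ) (hx : Function.Injective x) (E : Set (Sym2 V)) :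
    span ℝ (rowS (fun v => (x v, x v ^ 2)) '' bootStep (SimpleGraph.completeGraph (Fin 4)) E)
      = span ℝ (rowS (fun v => (x v, x v ^ 2)) '' E) := by
  set p : V → ℝ × ℝ := fun v => (x v, x v ^ 2) with hp
  refine le_antisymm ?_ (span_mono (Set.image_mono Set.subset_union_left))
  rw [span_le]
  rintro z ⟨e, he, rfl⟩
  rcases he with he | ⟨f, hef, hsub⟩
  · exact subset_span ⟨e, he, rfl⟩
  · obtain ⟨e₀, he₀, rfl⟩ := hef
    induction e₀ using Sym2.ind with
    | _ i0 j0 =>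
      have hij : i0 ≠ j0 := he₀
      rw [Sym2.map_pair_eq]
      refine row_mem_span x hx f i0 j0 hij E ?_
      intro i j hne h1 h2
      have hcopy : s(f i, f j) ∈ copyEdges (SimpleGraph.completeGraph (Fin 4)) f :=
        ⟨s(i, j), hne, Sym2.map_pair_eq f i j⟩
      rcases hsub hcopy with heq | hmem
      · exfalso
        rw [Sym2.map_pair_eq, Sym2.eq_iff] at heq
        rcases heq with ⟨ha, hb⟩ | ⟨ha, hb⟩
        · exact h1 (by rw [f.injective ha, f.injective hb])
        · exact h2 (by rw [f.injective ha, f.injective hb])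
      · exact hmem

lemma span_bootClosure (x : V → ℝ) (hx : Function.Injective x) (E : Set (Sym2 V)) :
    span ℝ (rowS (fun v => (x v, x v ^ 2)) '' bootClosure (SimpleGraph.completeGraph (Fin 4)) E)
      = span ℝ (rowS (fun v => (x v, x v ^ 2)) '' E) := by
  have hiter : ∀ t : ℕ,
      span ℝ (rowS (fun v => (x v, x v ^ 2)) '' (bootStep (SimpleGraph.completeGraph (Fin 4)))^[t] E)
        = span ℝ (rowS (fun v => (x v, x v ^ 2)) '' E) := by
    intro t
    induction t with
    | zero => rfl
    | succ t ih =>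
      rw [Function.iterate_succ_apply', span_bootStep x hx, ih]
  rw [bootClosure, Set.image_iUnion, span_iUnion]
  simp only [hiter, iSup_const]

/-- Projection killing the coordinates in `S`. -/
noncomputable def projS (S : Set V) [DecidablePred (· ∈ S)] :
    (V → ℝ × ℝ) →ₗ[ℝ] (V → ℝ × ℝ) where
  toFun g := fun v => if v ∈ S then 0 else g v
  map_add' g h := by funext v; by_cases hv : v ∈ S <;> simp [hv]
  map_smul' c g := by funext v; by_cases hv : v ∈ S <;> simp [hv]

lemma projS_single_mem (S : Set V) [DecidablePred (· ∈ S)] {u : V} (hu : u ∈ S)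
    (z : ℝ × ℝ) : projS S (Pi.single u z : V → ℝ × ℝ) = 0 := by
  funext w
  by_cases hw : w ∈ S
  · simp [projS, hw]
  · have : w ≠ u := fun h => hw (h ▸ hu)
    simp [projS, hw, Pi.single_eq_of_ne this]

lemma projS_single_not_mem (S : Set V) [DecidablePred (· ∈ S)] {u : V} (hu : u ∉ S)
    (z : ℝ × ℝ) : projS S (Pi.single u z : V → ℝ × ℝ) = Pi.single u z := by
  funext w
  by_cases hw : w ∈ S
  · have : w ≠ u := fun h => hu (h ▸ hw)
    simp [projS, hw, Pi.single_eq_of_ne this]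
  · simp [projS, hw]

end K4Boot

/-- **Lemma 25.** Let `S ⊆ R` with `|S| ≥ 2`, and let `G` be a set of edges of the
complete graph on `R`. If the `K_4`-bootstrap closure of `G ∪ E(K_S)` is `E(K_R)`, then
`G` has at least `2(|R| - |S|)` edges not having both endpoints in `S`. -/
theorem spanned_from_clique_min_edges {R : Type*} [Fintype R] (S : Set R)
    (hS : 2 ≤ S.ncard) (G : Set (Sym2 R))
    (h : bootClosure (SimpleGraph.completeGraph (Fin 4))
        (G ∪ {e : Sym2 R | ¬ e.IsDiag ∧ ∀ v ∈ e, v ∈ S}) =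
      (⊤ : SimpleGraph R).edgeSet) :
    2 * (Fintype.card R - S.ncard) ≤ {f ∈ G | ¬ ∀ v ∈ f, v ∈ S}.ncard := by
  classical
  open K4Boot Submodule in
  -- the positions: distinct points on the parabola
  set x : R → ℝ := fun v => ((Fintype.equivFin R v : ℕ) : ℝ) with hxdef
  have hx : Function.Injective x := by
    intro u v huv
    have : ((Fintype.equivFin R u : ℕ) : ℝ) = ((Fintype.equivFin R v : ℕ) : ℝ) := huv
    exact (Fintype.equivFin R).injective (Fin.val_injective (Nat.cast_injective this))
  set p : R → ℝ × ℝ := fun v => (x v, x v ^ 2) with hpdef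
  set E0 : Set (Sym2 R) := G ∪ {e : Sym2 R | ¬ e.IsDiag ∧ ∀ v ∈ e, v ∈ S} with hE0
  set Gout : Set (Sym2 R) := {f ∈ G | ¬ ∀ v ∈ f, v ∈ S} with hGout
  have hspan : span ℝ (rowS p '' (⊤ : SimpleGraph R).edgeSet) = span ℝ (rowS p '' E0) := by
    rw [← h]; exact span_bootClosure x hx E0
  have hmapped : span ℝ (⇑(projS S) '' (rowS p '' (⊤ : SimpleGraph R).edgeSet))
      = span ℝ (⇑(projS S) '' (rowS p '' E0)) := by
    rw [← Submodule.map_span, ← Submodule.map_span, hspan]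
  set W : Submodule ℝ (R → ℝ × ℝ) := span ℝ (⇑(projS S) '' (rowS p '' Gout)) with hW
  have hRHS : span ℝ (⇑(projS S) '' (rowS p '' E0)) ≤ W := by
    rw [span_le]
    rintro z ⟨-, ⟨e, he, rfl⟩, rfl⟩
    by_cases hallS : ∀ v ∈ e, v ∈ S
    · induction e using Sym2.ind with
      | _ u v =>
        have hu : u ∈ S := hallS u (Sym2.mem_mk_left u v)
        have hv : v ∈ S := hallS v (Sym2.mem_mk_right u v)
        have : projS S (rowS p s(u, v)) = 0 := by
          rw [rowS_mk, rowf, map_add, projS_single_mem S hu, projS_single_mem S hv, add_zero]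
        rw [this]; exact zero_mem W
    · have heG : e ∈ G := by
        rcases he with hG | hKS
        · exact hG
        · exact absurd hKS.2 hallS
      exact subset_span ⟨rowS p e, ⟨e, ⟨heG, hallS⟩, rfl⟩, rfl⟩
  -- two vertices of S
  obtain ⟨a, b, ha, hb, hab⟩ := (Set.one_lt_ncard_iff S.toFinite).1 (by omega)
  set g : Fin 2 → R := ![a, b] with hgdef
  have hgS : ∀ k : Fin 2, g k ∈ S := by intro k; fin_cases k <;> simpa [hgdef]
  -- the independent family
  set w : (↥(Sᶜ) × Fin 2) → (R → ℝ × ℝ) :=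
    fun i => (Pi.single (i.1 : R) (p (i.1 : R) - p (g i.2)) : R → ℝ × ℝ) with hwdef
  have hwW : ∀ i, w i ∈ W := by
    rintro ⟨v, k⟩
    have hvS : (v : R) ∉ S := v.2
    have hne : (v : R) ≠ g k := fun hh => hvS (hh ▸ hgS k)
    have hedge : s((v : R), g k) ∈ (⊤ : SimpleGraph R).edgeSet := by
      rw [SimpleGraph.mem_edgeSet]; exact hne
    have hcalc : w (v, k) = projS S (rowS p s((v : R), g k)) := by
      rw [rowS_mk, rowf, map_add, projS_single_not_mem S hvS, projS_single_mem S (hgS k),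
        add_zero]
    rw [hcalc]
    have : projS S (rowS p s((v : R), g k)) ∈
        span ℝ (⇑(projS S) '' (rowS p '' (⊤ : SimpleGraph R).edgeSet)) :=
      subset_span ⟨rowS p s((v : R), g k), ⟨s((v : R), g k), hedge, rfl⟩, rfl⟩
    exact (hmapped ▸ this |> hRHS)
  have hli : LinearIndependent ℝ w := by
    rw [Fintype.linearIndependent_iff]
    intro gc hgc i0
    obtain ⟨v0, k0⟩ := i0
    have hev : ∑ v : ↥(Sᶜ), ∑ k : Fin 2, (gc (v, k) • w (v, k)) ((v0 : R)) = 0 := by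
      have := congrFun hgc ((v0 : R))
      rw [Fintype.sum_prod_type] at this
      simpa only [Finset.sum_apply, Pi.zero_apply] using this
    have hblock : ∀ v : ↥(Sᶜ), ∑ k : Fin 2, (gc (v, k) • w (v, k)) ((v0 : R))
        = if v = v0 then ∑ k : Fin 2, gc (v0, k) • (p (v0 : R) - p (g k)) else 0 := by
      intro v
      by_cases hv : v = v0
      · subst hv
        simp [hwdef, Pi.smul_apply, Pi.single_eq_same]
      · have hcoe : (v0 : R) ≠ (v : R) := fun hh => hv (Subtype.ext hh).symm
        simp [hwdef, Pi.smul_apply, Pi.single_eq_of_ne hcoe, hv]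
    rw [Finset.sum_congr rfl (fun v _ => hblock v), Finset.sum_ite_eq' Finset.univ v0] at hev
    simp only [Finset.mem_univ, if_true] at hev
    rw [Fin.sum_univ_two] at hev
    have hg0 : g 0 = a := by simp [hgdef]
    have hg1 : g 1 = b := by simp [hgdef]
    rw [hg0, hg1] at hev
    set α := gc (v0, 0) with hα
    set β := gc (v0, 1) with hβ
    have e1 : α * (x (v0 : R) - x a) + β * (x (v0 : R) - x b) = 0 := by
      have := congrArg Prod.fst hev
      simpa [hpdef, Prod.fst_add, Prod.fst_sub, smul_eq_mul] using this
    have e2 : α * (x (v0 : R) ^ 2 - x a ^ 2) + β * (x (v0 : R) ^ 2 - x b ^ 2) = 0 := by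
      have := congrArg Prod.snd hev
      simpa [hpdef, Prod.snd_add, Prod.snd_sub, smul_eq_mul] using this
    have hv0S : (v0 : R) ∉ S := v0.2
    have hva : x (v0 : R) - x a ≠ 0 :=
      sub_ne_zero.2 (fun hh => hv0S ((hx hh) ▸ ha))
    have hvb : x (v0 : R) - x b ≠ 0 :=
      sub_ne_zero.2 (fun hh => hv0S ((hx hh) ▸ hb))
    have hab' : x a - x b ≠ 0 := sub_ne_zero.2 (fun hh => hab (hx hh))
    have hbz : β = 0 := by
      have h3 : β * ((x (v0 : R) - x b) * (x a - x b)) = 0 := by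
        linear_combination (x (v0 : R) + x a) * e1 - e2
      rcases mul_eq_zero.1 h3 with hh | hh
      · exact hh
      · exact absurd hh (mul_ne_zero hvb hab')
    have haz : α = 0 := by
      have h4 : α * (x (v0 : R) - x a) = 0 := by
        linear_combination e1 - (x (v0 : R) - x b) * hbz
      rcases mul_eq_zero.1 h4 with hh | hh
      · exact hh
      · exact absurd hh hva
    fin_cases k0
    · exact haz
    · exact hbz
  -- independence inside W
  have hliW : LinearIndependent ℝ (fun i => (⟨w i, hwW i⟩ : W)) := by
    apply LinearIndependent.of_comp W.subtype
    exact hli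
  have hcard : Fintype.card (↥(Sᶜ) × Fin 2) ≤ Module.finrank ℝ W :=
    hliW.fintype_card_le_finrank
  -- finrank of W is at most the number of edges of Gout
  have hGoutfin : Gout.Finite := Set.toFinite _
  have himfin : ((⇑(projS S) '' (rowS p '' Gout))).Finite := (hGoutfin.image _).image _
  have hWle : Module.finrank ℝ W ≤ Gout.ncard := by
    letI := himfin.fintype
    calc Module.finrank ℝ W ≤ (⇑(projS S) '' (rowS p '' Gout)).toFinset.card :=
          finrank_span_le_card _
      _ = (⇑(projS S) '' (rowS p '' Gout)).ncard := (Set.ncard_eq_toFinset_card' _).symm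
      _ ≤ (rowS p '' Gout).ncard := Set.ncard_image_le (hGoutfin.image _)
      _ ≤ Gout.ncard := Set.ncard_image_le hGoutfin
  -- cardinality computation
  have hcompl : Fintype.card ↥(Sᶜ) = Fintype.card R - S.ncard := by
    rw [Fintype.card_compl_set]
    congr 1
    rw [Set.ncard_eq_toFinset_card', Set.toFinset_card]
  have hcardprod : Fintype.card (↥(Sᶜ) × Fin 2) = 2 * (Fintype.card R - S.ncard) := by
    rw [Fintype.card_prod, Fintype.card_fin, hcompl, mul_comm]
  omega
end
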